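/- arXiv:2206.05691 — 3 statements merged into one kernel-verified Lean document; each statement's English description precedes it below -/
import Mathlib

section
/- Let h : X → ℝ be measurable with π(h) = 0 and h ∈ L^m(π) for some m ≥ 1, and let 1 ≤ p < m. Then for every integer t ≥ 0, ‖P^t h‖_{L^p(π)} ≤ 2 · ℙ_{π⊗π}(τ > t)^{(m−p)/(mp)} · ‖h‖_{L^m(π)}, where ℙ_{π⊗π}(τ > t) = ∫ ℙ_{x,y}(τ > t) (π⊗π)(dx,dy). -/
open MeasureTheory ProbabilityTheory ENNReal Filter Topology

section Setup

variable {S : Type*} [MeasurableSpace S]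

/-- The `t`-fold composition of a Markov kernel. -/
noncomputable def kpow (P : ProbabilityTheory.Kernel S S) : ℕ → ProbabilityTheory.Kernel S S
  | 0 => ProbabilityTheory.Kernel.id
  | n + 1 => (kpow P n).comp P

/-- `IsTrajMeasure P ν μ` : `μ` is the law on `ℕ → S` of the time-homogeneous Markov chain
with transition kernel `P` and initial distribution `ν`. -/
def IsTrajMeasure (P : ProbabilityTheory.Kernel S S) (ν : MeasureTheory.Measure S)
    (μ : MeasureTheory.Measure (ℕ → S)) : Prop :=
  MeasureTheory.IsProbabilityMeasure μ ∧
    μ.map (fun ω => ω 0) = ν ∧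
    ∀ n : ℕ,
      μ.map (fun ω => ((fun i : Fin (n + 1) => ω (i : ℕ)), ω (n + 1))) =
        (μ.map (fun ω => fun i : Fin (n + 1) => ω (i : ℕ))).compProd
          (P.comap (fun v : Fin (n + 1) → S => v (Fin.last n)) (measurable_pi_apply _))

/-- `Q` is a faithful coupling of the kernel `P` with itself. -/
def IsFaithfulCoupling (P : ProbabilityTheory.Kernel S S)
    (Q : ProbabilityTheory.Kernel (S × S) (S × S)) : Prop :=
  (∀ p : S × S, (Q p).map Prod.fst = P p.1) ∧
    (∀ p : S × S, (Q p).map Prod.snd = P p.2) ∧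
    ∀ x : S, Q (x, x) {q : S × S | q.1 = q.2} = 1

/-- The meeting time `τ = inf {t : X_t = Y_t}` of a coupled trajectory, with value `∞`
if the chains never meet. -/
noncomputable def meetTime (ω : ℕ → S × S) : ℝ≥0∞ :=
  ⨅ (n : ℕ) (_ : (ω n).1 = (ω n).2), (n : ℝ≥0∞)

/-- `G = ∑_{t=0}^{τ-1} (h(X_t) - h(Y_t))` along a coupled trajectory. -/
noncomputable def Gsum (h : S → ℝ) (ω : ℕ → S × S) : ℝ :=
  ∑' t : ℕ, if (t : ℝ≥0∞) < meetTime ω then h (ω t).1 - h (ω t).2 else 0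

/-- Total variation distance between two measures. -/
noncomputable def tvDist (μ ν : MeasureTheory.Measure S) : ℝ :=
  ⨆ A : {A : Set S // MeasurableSet A}, |(μ A.1).toReal - (ν A.1).toReal|

/-- `ζ(s) = ∑_{n ≥ 1} n^{-s}`, as a value in `ℝ≥0∞`. -/
noncomputable def zetaE (s : ℝ) : ℝ≥0∞ := ∑' n : ℕ, ((n : ℝ≥0∞) + 1) ^ (-s)

/-- `π`-irreducibility of a kernel. -/
def PiIrreducible (P : ProbabilityTheory.Kernel S S) (π : MeasureTheory.Measure S) : Prop :=
  ∀ x : S, ∀ A : Set S, MeasurableSet A → 0 < π A → ∃ n : ℕ, 1 ≤ n ∧ 0 < (kpow P n) x A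

/-- `g⋆(x) = ∑_{t=0}^∞ P^t h (x)`. -/
noncomputable def gstar (P : ProbabilityTheory.Kernel S S) (h : S → ℝ) (x : S) : ℝ :=
  ∑' t : ℕ, ∫ z, h z ∂((kpow P t) x)

end Setup

section Aux

variable {S : Type*} [MeasurableSpace S]

lemma kpow_markov (P : Kernel S S) [IsMarkovKernel P] : ∀ n, IsMarkovKernel (kpow P n)
  | 0 => by rw [kpow]; infer_instance
  | n + 1 => by rw [kpow]; haveI := kpow_markov P n; infer_instance

lemma kpow_apply_succ (P : Kernel S S) (n : ℕ) (x : S) :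
    kpow P (n + 1) x = (P x).bind (kpow P n) := by
  rw [kpow, Kernel.comp_apply]

lemma kpow_succ_right (P : Kernel S S) (n : ℕ) (x : S) :
    kpow P (n + 1) x = (kpow P n x).bind P := by
  induction n generalizing x with
  | zero =>
    rw [kpow_apply_succ]
    show (P x).bind (kpow P 0) = (kpow P 0 x).bind P
    have h0 : (kpow P 0 : S → Measure S) = fun y => Measure.dirac y := by
      funext y; rw [kpow, Kernel.id_apply]
    rw [h0]
    simp only [Measure.bind_dirac]
    rw [Measure.dirac_bind P.measurable]
  | succ n ih =>
    rw [kpow_apply_succ]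
    have hfn : (kpow P (n + 1) : S → Measure S) = fun y => (kpow P n y).bind P := by
      funext y; exact ih y
    calc (P x).bind (kpow P (n + 1)) = (P x).bind (fun y => (kpow P n y).bind P) := by
          rw [hfn]
    _ = ((P x).bind (kpow P n)).bind P :=
          (Measure.bind_bind (kpow P n).measurable.aemeasurable P.measurable.aemeasurable).symm
    _ = (kpow P (n + 1) x).bind P := by rw [← kpow_apply_succ]

lemma bind_kpow (P : Kernel S S) (π : Measure S) (hinv : π.bind (fun x => P x) = π) :
    ∀ n, π.bind (fun x => kpow P n x) = π
  | 0 => by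
    have h0 : (fun x => kpow P 0 x) = fun y : S => Measure.dirac y := by
      funext y; rw [kpow, Kernel.id_apply]
    rw [h0, Measure.bind_dirac]
  | n + 1 => by
    have h1 : (fun x => kpow P (n + 1) x) = fun x => (P x).bind (kpow P n) := by
      funext x; exact kpow_apply_succ P n x
    rw [h1, ← Measure.bind_bind P.measurable.aemeasurable (kpow P n).measurable.aemeasurable, hinv,
      bind_kpow P π hinv n]


variable {Q : Kernel (S × S) (S × S)} {η : Kernel (S × S) (ℕ → S × S)}

lemma traj_map [IsMarkovKernel Q]
    (hη : ∀ p : S × S, IsTrajMeasure Q (MeasureTheory.Measure.dirac p) (η p)) (q : S × S) :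
    ∀ n, (η q).map (fun ω => ω n) = kpow Q n q
  | 0 => by
    rw [(hη q).2.1, kpow, Kernel.id_apply]
  | n + 1 => by
    haveI : IsProbabilityMeasure (η q) := (hη q).1
    have hpre : Measurable fun (ω : ℕ → S × S) => fun i : Fin (n + 1) => ω (i : ℕ) :=
      measurable_pi_lambda _ fun i => measurable_pi_apply _
    haveI : IsProbabilityMeasure ((η q).map (fun ω => fun i : Fin (n + 1) => ω (i : ℕ))) :=
      Measure.isProbabilityMeasure_map hpre.aemeasurable
    have hφ : Measurable fun (ω : ℕ → S × S) =>
        ((fun i : Fin (n + 1) => ω (i : ℕ)), ω (n + 1)) :=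
      hpre.prodMk (measurable_pi_apply _)
    ext s hs
    rw [Measure.map_apply (measurable_pi_apply (n+1)) hs]
    have hpreim : (fun (ω : ℕ → S × S) => ω (n + 1)) ⁻¹' s
        = (fun ω => ((fun i : Fin (n + 1) => ω (i : ℕ)), ω (n + 1))) ⁻¹' (Prod.snd ⁻¹' s) := rfl
    rw [hpreim, ← Measure.map_apply hφ (measurable_snd hs), (hη q).2.2 n,
      Measure.compProd_apply (measurable_snd hs)]
    have hint : ∀ v : Fin (n + 1) → S × S,
        (Q.comap (fun v : Fin (n + 1) → S × S => v (Fin.last n)) (measurable_pi_apply _)) v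
          (Prod.mk v ⁻¹' (Prod.snd ⁻¹' s)) = Q (v (Fin.last n)) s := by
      intro v; rw [Kernel.comap_apply]; rfl
    simp_rw [hint]
    rw [← lintegral_map (Q.measurable_coe hs) (measurable_pi_apply (Fin.last n))]
    have hmm : ((η q).map (fun ω => fun i : Fin (n + 1) => ω (i : ℕ))).map
        (fun v : Fin (n + 1) → S × S => v (Fin.last n)) = (η q).map (fun ω => ω n) := by
      rw [Measure.map_map (measurable_pi_apply _) hpre]
      have : ((fun v : Fin (n + 1) → S × S => v (Fin.last n)) ∘
          fun (ω : ℕ → S × S) => fun i : Fin (n + 1) => ω (i : ℕ))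
          = fun (ω : ℕ → S × S) => ω n := by
        funext ω; simp [Function.comp, Fin.val_last]
      rw [this]
    rw [hmm, traj_map hη q n, ← Measure.bind_apply hs Q.measurable.aemeasurable, ← kpow_succ_right]

lemma kpow_map_fst {P : Kernel S S} [IsMarkovKernel Q] [IsMarkovKernel P]
    (hQ1 : ∀ p : S × S, (Q p).map Prod.fst = P p.1) (q : S × S) :
    ∀ n, (kpow Q n q).map Prod.fst = kpow P n q.1
  | 0 => by
    rw [kpow, Kernel.id_apply, Measure.map_dirac' measurable_fst, kpow, Kernel.id_apply]
  | n + 1 => by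
    ext s hs
    rw [Measure.map_apply measurable_fst hs, kpow_apply_succ,
      Measure.bind_apply (measurable_fst hs) (kpow Q n).measurable.aemeasurable]
    have h1 : ∀ r : S × S, kpow Q n r (Prod.fst ⁻¹' s) = kpow P n r.1 s := fun r => by
      rw [← Measure.map_apply measurable_fst hs, kpow_map_fst hQ1 r n]
    simp_rw [h1]
    rw [show (∫⁻ r, kpow P n r.1 s ∂(Q q)) = ∫⁻ x, kpow P n x s ∂((Q q).map Prod.fst) from
      (lintegral_map ((kpow P n).measurable_coe hs) measurable_fst).symm]
    rw [hQ1 q, ← Measure.bind_apply hs (kpow P n).measurable.aemeasurable, ← kpow_apply_succ]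

lemma kpow_map_snd {P : Kernel S S} [IsMarkovKernel Q] [IsMarkovKernel P]
    (hQ2 : ∀ p : S × S, (Q p).map Prod.snd = P p.2) (q : S × S) :
    ∀ n, (kpow Q n q).map Prod.snd = kpow P n q.2
  | 0 => by
    rw [kpow, Kernel.id_apply, Measure.map_dirac' measurable_snd, kpow, Kernel.id_apply]
  | n + 1 => by
    ext s hs
    rw [Measure.map_apply measurable_snd hs, kpow_apply_succ,
      Measure.bind_apply (measurable_snd hs) (kpow Q n).measurable.aemeasurable]
    have h1 : ∀ r : S × S, kpow Q n r (Prod.snd ⁻¹' s) = kpow P n r.2 s := fun r => by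
      rw [← Measure.map_apply measurable_snd hs, kpow_map_snd hQ2 r n]
    simp_rw [h1]
    rw [show (∫⁻ r, kpow P n r.2 s ∂(Q q)) = ∫⁻ x, kpow P n x s ∂((Q q).map Prod.snd) from
      (lintegral_map ((kpow P n).measurable_coe hs) measurable_snd).symm]
    rw [hQ2 q, ← Measure.bind_apply hs (kpow P n).measurable.aemeasurable, ← kpow_apply_succ]


lemma not_lt_meetTime_iff (ω : ℕ → S × S) (t : ℕ) :
    ¬ ((t : ℝ≥0∞) < meetTime ω) ↔ ∃ s ≤ t, (ω s).1 = (ω s).2 := by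
  constructor
  · intro hlt
    by_contra hno
    push_neg at hno
    apply hlt
    have hge : (t : ℝ≥0∞) + 1 ≤ meetTime ω := by
      refine le_iInf fun n => le_iInf fun hn => ?_
      have htn : t < n := by
        by_contra hle; push_neg at hle; exact hno n hle hn
      exact_mod_cast Nat.succ_le_of_lt htn
    exact lt_of_lt_of_le (ENNReal.lt_add_right (ENNReal.natCast_ne_top t) one_ne_zero) hge
  · rintro ⟨s, hst, hd⟩ hlt
    have h1 : meetTime ω ≤ (s : ℝ≥0∞) := iInf_le_of_le s (iInf_le _ hd)
    exact (hlt.trans_le (h1.trans (Nat.cast_le.mpr hst))).false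

def Dset (Q : Kernel (S × S) (S × S)) (h : S → ℝ) : ℕ → Set (S × S)
  | 0 => {z | h z.1 = h z.2}
  | j + 1 => {w | Q w (Dset Q h j)ᶜ = 0}

lemma measurableSet_Dset (Q : Kernel (S × S) (S × S)) {h : S → ℝ} (hmeas : Measurable h) :
    ∀ j, MeasurableSet (Dset Q h j)
  | 0 => measurableSet_eq_fun (hmeas.comp measurable_fst) (hmeas.comp measurable_snd)
  | j + 1 => (Q.measurable_coe (measurableSet_Dset Q hmeas j).compl)
      (measurableSet_singleton 0)

lemma diag_subset_Dset [IsMarkovKernel Q]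
    (hQd : ∀ x : S, Q (x, x) {q : S × S | q.1 = q.2} = 1)
    {h : S → ℝ} (hmeas : Measurable h) : ∀ j, {z : S × S | z.1 = z.2} ⊆ Dset Q h j
  | 0 => fun z hz => by
    have : z.1 = z.2 := hz
    show h z.1 = h z.2
    rw [this]
  | j + 1 => fun w hw => by
    have hw' : (w.1, w.1) = w := Prod.ext rfl (hw : w.1 = w.2)
    have h1 : Q w (Dset Q h j) = 1 := by
      refine le_antisymm prob_le_one ?_
      calc (1 : ℝ≥0∞) = Q w {q : S × S | q.1 = q.2} := by rw [← hw']; exact (hQd w.1).symm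
      _ ≤ Q w (Dset Q h j) := measure_mono (diag_subset_Dset hQd hmeas j)
    show Q w (Dset Q h j)ᶜ = 0
    rw [measure_compl (measurableSet_Dset Q hmeas j) (measure_ne_top _ _), h1, measure_univ,
      tsub_self]

lemma traj_step_null [IsMarkovKernel Q]
    (hη : ∀ p : S × S, IsTrajMeasure Q (MeasureTheory.Measure.dirac p) (η p))
    {A B : Set (S × S)} (hA : MeasurableSet A) (hB : MeasurableSet B)
    (hAB : ∀ w ∈ A, Q w Bᶜ = 0) (q : S × S) (n : ℕ) :
    η q {ω | ω n ∈ A ∧ ω (n + 1) ∈ Bᶜ} = 0 := by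
  haveI : IsProbabilityMeasure (η q) := (hη q).1
  have hpre : Measurable fun (ω : ℕ → S × S) => fun i : Fin (n + 1) => ω (i : ℕ) :=
    measurable_pi_lambda _ fun i => measurable_pi_apply _
  haveI : IsProbabilityMeasure ((η q).map (fun ω => fun i : Fin (n + 1) => ω (i : ℕ))) :=
    Measure.isProbabilityMeasure_map hpre.aemeasurable
  have hφ : Measurable fun (ω : ℕ → S × S) =>
      ((fun i : Fin (n + 1) => ω (i : ℕ)), ω (n + 1)) :=
    hpre.prodMk (measurable_pi_apply _)
  have hT : MeasurableSet
      (((fun v : Fin (n + 1) → S × S => v (Fin.last n)) ⁻¹' A) ×ˢ Bᶜ) :=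
    ((measurable_pi_apply (Fin.last n)) hA).prod hB.compl
  have hset : {ω : ℕ → S × S | ω n ∈ A ∧ ω (n + 1) ∈ Bᶜ}
      = (fun ω : ℕ → S × S => ((fun i : Fin (n + 1) => ω (i : ℕ)), ω (n + 1))) ⁻¹'
        (((fun v : Fin (n + 1) → S × S => v (Fin.last n)) ⁻¹' A) ×ˢ Bᶜ) := by
    ext ω
    simp [Set.mem_prod, Fin.val_last]
  rw [hset, ← Measure.map_apply hφ hT, (hη q).2.2 n, Measure.compProd_apply hT]
  have hzero : ∀ v : Fin (n + 1) → S × S,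
      (Q.comap (fun v : Fin (n + 1) → S × S => v (Fin.last n)) (measurable_pi_apply _)) v
        (Prod.mk v ⁻¹' (((fun v : Fin (n + 1) → S × S => v (Fin.last n)) ⁻¹' A) ×ˢ Bᶜ))
        = 0 := by
    intro v
    rw [Kernel.comap_apply]
    by_cases hv : v (Fin.last n) ∈ A
    · have hpr : Prod.mk v ⁻¹'
          (((fun v : Fin (n + 1) → S × S => v (Fin.last n)) ⁻¹' A) ×ˢ Bᶜ) = Bᶜ := by
        ext z; simp [hv]
      rw [hpr]; exact hAB _ hv
    · have hpr : Prod.mk v ⁻¹'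
          (((fun v : Fin (n + 1) → S × S => v (Fin.last n)) ⁻¹' A) ×ˢ Bᶜ) = ∅ := by
        ext z; simp [hv]
      rw [hpr]; simp
  simp_rw [hzero]
  simp

lemma traj_null [IsMarkovKernel Q]
    (hη : ∀ p : S × S, IsTrajMeasure Q (MeasureTheory.Measure.dirac p) (η p))
    (hQd : ∀ x : S, Q (x, x) {q : S × S | q.1 = q.2} = 1)
    {h : S → ℝ} (hmeas : Measurable h) (t : ℕ) (q : S × S) :
    η q {ω | (∃ s ≤ t, (ω s).1 = (ω s).2) ∧ h (ω t).1 ≠ h (ω t).2} = 0 := by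
  have hsub : {ω : ℕ → S × S | (∃ s ≤ t, (ω s).1 = (ω s).2) ∧ h (ω t).1 ≠ h (ω t).2}
      ⊆ ⋃ (k : ℕ) (_ : k < t),
        {ω : ℕ → S × S | ω k ∈ Dset Q h (t - k) ∧ ω (k + 1) ∈ (Dset Q h (t - (k + 1)))ᶜ} := by
    rintro ω ⟨⟨s, hst, hdiag⟩, hne⟩
    by_contra hnot
    simp only [Set.mem_iUnion, not_exists, Set.mem_setOf_eq] at hnot
    have key : ∀ j, s + j ≤ t → ω (s + j) ∈ Dset Q h (t - (s + j)) := by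
      intro j
      induction j with
      | zero => intro _; exact diag_subset_Dset hQd hmeas _ hdiag
      | succ j ih =>
        intro hle
        have hle' : s + j ≤ t := by omega
        have hklt : s + j < t := by omega
        have hmem := ih hle'
        by_contra hc
        exact hnot (s + j) hklt ⟨hmem, hc⟩
    have hkey := key (t - s) (by omega)
    have heq : s + (t - s) = t := by omega
    rw [heq, Nat.sub_self] at hkey
    exact hne hkey
  refine measure_mono_null hsub ?_
  refine measure_iUnion_null fun k => measure_iUnion_null fun hk => ?_
  refine traj_step_null hη (measurableSet_Dset Q hmeas (t - k))
    (measurableSet_Dset Q hmeas (t - (k + 1))) ?_ q k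
  intro w hw
  have : t - k = (t - (k + 1)) + 1 := by omega
  rw [this] at hw
  exact hw

lemma lintegral_rpow_le_lintegral_rpow {α : Type*} [MeasurableSpace α] {ν : Measure α}
    [IsProbabilityMeasure ν] {f : α → ℝ≥0∞} (hf : AEMeasurable f ν) {r : ℝ} (hr : 1 ≤ r) :
    (∫⁻ a, f a ∂ν) ^ r ≤ ∫⁻ a, f a ^ r ∂ν := by
  rcases eq_or_lt_of_le hr with hr1 | hr1
  · simp [← hr1]
  have hr0 : (0 : ℝ) < r := lt_trans one_pos hr1
  have hconj : r.HolderConjugate (r / (r - 1)) := by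
    rw [Real.holderConjugate_iff]; constructor
    · exact hr1
    · have h1 : r - 1 ≠ 0 := sub_ne_zero.mpr (ne_of_gt hr1)
      field_simp; ring
  have H := ENNReal.lintegral_mul_le_Lp_mul_Lq ν hconj hf
    (aemeasurable_const (b := (1 : ℝ≥0∞)))
  simp only [Pi.mul_apply, mul_one, ENNReal.one_rpow, lintegral_one, measure_univ,
    ENNReal.one_rpow] at H
  calc (∫⁻ a, f a ∂ν) ^ r ≤ ((∫⁻ a, f a ^ r ∂ν) ^ (1 / r)) ^ r :=
        ENNReal.rpow_le_rpow H hr0.le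
  _ = ∫⁻ a, f a ^ r ∂ν := by
      rw [← ENNReal.rpow_mul, one_div_mul_cancel (ne_of_gt hr0), ENNReal.rpow_one]

end Aux

/-- `L^p(π)` bound on `P^t h` in terms of the survival function of the
meeting time under `π ⊗ π`. -/
theorem Lp_bound_kernel_iterate {S : Type*} [MeasurableSpace S]
    (P : ProbabilityTheory.Kernel S S) [IsMarkovKernel P]
    (π : MeasureTheory.Measure S) [IsProbabilityMeasure π]
    (hinv : π.bind (fun x => P x) = π)
    (Q : ProbabilityTheory.Kernel (S × S) (S × S)) [IsMarkovKernel Q]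
    (hQ : IsFaithfulCoupling P Q)
    (η : ProbabilityTheory.Kernel (S × S) (ℕ → S × S))
    (hη : ∀ p : S × S, IsTrajMeasure Q (MeasureTheory.Measure.dirac p) (η p))
    (h : S → ℝ) (hmeas : Measurable h) (hmean : ∫ x, h x ∂π = 0)
    (m : ℝ) (hm : 1 ≤ m) (hLm : ∫⁻ x, (‖h x‖₊ : ℝ≥0∞) ^ m ∂π < ⊤)
    (p : ℝ) (hp : 1 ≤ p) (hpm : p < m) :
    ∀ t : ℕ,
      (∫⁻ x, (‖∫ z, h z ∂((kpow P t) x)‖₊ : ℝ≥0∞) ^ p ∂π) ^ (1 / p) ≤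
        2 * (∫⁻ q, η q {ω | (t : ℝ≥0∞) < meetTime ω} ∂(π.prod π)) ^ ((m - p) / (m * p)) *
          (∫⁻ x, (‖h x‖₊ : ℝ≥0∞) ^ m ∂π) ^ (1 / m) := by
  intro t
  obtain ⟨hQ1, hQ2, hQd⟩ := hQ
  haveI hηM : IsMarkovKernel η := ⟨fun q => (hη q).1⟩
  haveI := kpow_markov P t
  haveI := kpow_markov Q t
  have hp0 : (0 : ℝ) < p := lt_of_lt_of_le one_pos hp
  have hm0 : (0 : ℝ) < m := lt_of_lt_of_le one_pos hm
  have hm1 : (1 : ℝ) < m := lt_of_le_of_lt hp hpm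
  have hne : Measurable fun x => (‖h x‖₊ : ℝ≥0∞) := hmeas.enorm
  set T : S → ℝ := fun x => ∫ z, h z ∂(kpow P t x) with hTdef
  have hTmeas : Measurable T := by
    have : StronglyMeasurable fun x => ∫ z, h z ∂(kpow P t x) :=
      StronglyMeasurable.integral_kernel_prod_right (κ := kpow P t)
        (f := fun _ z => h z) ((hmeas.comp measurable_snd).stronglyMeasurable)
    exact this.measurable
  set Hm : ℝ≥0∞ := ∫⁻ x, (‖h x‖₊ : ℝ≥0∞) ^ m ∂π with hHmdef
  have hL1 : ∫⁻ x, (‖h x‖₊ : ℝ≥0∞) ∂π ≠ ⊤ := by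
    intro hcon
    have hj := lintegral_rpow_le_lintegral_rpow (ν := π) hne.aemeasurable hm
    rw [hcon, ENNReal.top_rpow_of_pos hm0] at hj
    exact lt_irrefl _ (lt_of_le_of_lt hj hLm)
  have hbind : ∀ n, π.bind (fun x => kpow P n x) = π := bind_kpow P π hinv
  have hbindlin : ∫⁻ x, ∫⁻ z, (‖h z‖₊ : ℝ≥0∞) ∂(kpow P t x) ∂π
      = ∫⁻ x, (‖h x‖₊ : ℝ≥0∞) ∂π := by
    rw [← MeasureTheory.Measure.lintegral_bind (kpow P t).measurable.aemeasurable hne.aemeasurable, hbind t]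
  have hbindm : ∫⁻ x, ∫⁻ z, (‖h z‖₊ : ℝ≥0∞) ^ m ∂(kpow P t x) ∂π = Hm := by
    rw [← MeasureTheory.Measure.lintegral_bind (kpow P t).measurable.aemeasurable
      (hne.pow measurable_const).aemeasurable, hbind t]
  have hTle : ∀ x, (‖T x‖₊ : ℝ≥0∞) ≤ ∫⁻ z, (‖h z‖₊ : ℝ≥0∞) ∂(kpow P t x) := fun x =>
    enorm_integral_le_lintegral_enorm _
  have hTint : Integrable T π := by
    refine ⟨hTmeas.aestronglyMeasurable, ?_⟩
    show (∫⁻ x, (‖T x‖₊ : ℝ≥0∞) ∂π) < ⊤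
    calc ∫⁻ x, (‖T x‖₊ : ℝ≥0∞) ∂π
        ≤ ∫⁻ x, ∫⁻ z, (‖h z‖₊ : ℝ≥0∞) ∂(kpow P t x) ∂π := lintegral_mono hTle
    _ = ∫⁻ x, (‖h x‖₊ : ℝ≥0∞) ∂π := hbindlin
    _ < ⊤ := hL1.lt_top
  -- snd marginal of the compProd is the bind
  have hsnd : (π.compProd (kpow P t)).map Prod.snd = π.bind (fun x => kpow P t x) := by
    ext s hs
    rw [Measure.map_apply measurable_snd hs, Measure.compProd_apply (measurable_snd hs),
      Measure.bind_apply hs (kpow P t).measurable.aemeasurable]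
    rfl
  have hint2 : Integrable (fun z : S × S => h z.2) (π.compProd (kpow P t)) := by
    refine ⟨(hmeas.comp measurable_snd).aestronglyMeasurable, ?_⟩
    show (∫⁻ z, (‖h z.2‖₊ : ℝ≥0∞) ∂(π.compProd (kpow P t))) < ⊤
    have : ∫⁻ z, (‖h z.2‖₊ : ℝ≥0∞) ∂(π.compProd (kpow P t))
        = ∫⁻ x, (‖h x‖₊ : ℝ≥0∞) ∂π := by
      rw [← lintegral_map hne measurable_snd, hsnd, hbind t]
    rw [this]; exact hL1.lt_top
  have hTzero : ∫ x, T x ∂π = 0 := by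
    have h1 : ∫ x, T x ∂π = ∫ z, h z.2 ∂(π.compProd (kpow P t)) :=
      (MeasureTheory.Measure.integral_compProd hint2).symm
    rw [h1, ← integral_map measurable_snd.aemeasurable hmeas.aestronglyMeasurable, hsnd,
      hbind t, hmean]
  -- trajectory marginals
  have htraj : ∀ q n, (η q).map (fun ω => ω n) = kpow Q n q := fun q n => traj_map hη q n
  have hmap1 : ∀ q : S × S, (η q).map (fun ω => (ω t).1) = kpow P t q.1 := by
    intro q
    calc (η q).map (fun ω => (ω t).1)
        = ((η q).map (fun ω => ω t)).map Prod.fst :=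
          (Measure.map_map measurable_fst (measurable_pi_apply t)).symm
    _ = (kpow Q t q).map Prod.fst := by rw [htraj q t]
    _ = kpow P t q.1 := kpow_map_fst hQ1 q t
  have hmap2 : ∀ q : S × S, (η q).map (fun ω => (ω t).2) = kpow P t q.2 := by
    intro q
    calc (η q).map (fun ω => (ω t).2)
        = ((η q).map (fun ω => ω t)).map Prod.snd :=
          (Measure.map_map measurable_snd (measurable_pi_apply t)).symm
    _ = (kpow Q t q).map Prod.snd := by rw [htraj q t]
    _ = kpow P t q.2 := kpow_map_snd hQ2 q t
  -- basic measurable coordinate functions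
  have hc1 : Measurable fun ω : ℕ → S × S => (ω t).1 :=
    measurable_fst.comp (measurable_pi_apply t)
  have hc2 : Measurable fun ω : ℕ → S × S => (ω t).2 :=
    measurable_snd.comp (measurable_pi_apply t)
  have hF : Measurable fun ω : ℕ → S × S => (‖h (ω t).1 - h (ω t).2‖₊ : ℝ≥0∞) :=
    ((hmeas.comp hc1).sub (hmeas.comp hc2)).enorm
  have hF1 : Measurable fun ω : ℕ → S × S => (‖h (ω t).1‖₊ : ℝ≥0∞) :=
    (hmeas.comp hc1).enorm
  have hF2 : Measurable fun ω : ℕ → S × S => (‖h (ω t).2‖₊ : ℝ≥0∞) :=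
    (hmeas.comp hc2).enorm
  set g' : (S × S) → ℝ≥0∞ :=
    fun q => ∫⁻ ω, (‖h (ω t).1 - h (ω t).2‖₊ : ℝ≥0∞) ∂η q with hgdef
  have hgmeas : Measurable g' := Measurable.lintegral_kernel (κ := η) hF
  -- the good set
  set Gd : Set (S × S) := {q | (∫⁻ ω, (‖h (ω t).1‖₊ : ℝ≥0∞) ∂η q) < ⊤ ∧
      (∫⁻ ω, (‖h (ω t).2‖₊ : ℝ≥0∞) ∂η q) < ⊤} with hGddef
  have hGdmeas : MeasurableSet Gd :=
    ((Measurable.lintegral_kernel (κ := η) hF1) measurableSet_Iio).inter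
      ((Measurable.lintegral_kernel (κ := η) hF2) measurableSet_Iio)
  have hfin1 : ∫⁻ q, (∫⁻ ω, (‖h (ω t).1‖₊ : ℝ≥0∞) ∂η q) ∂(π.prod π)
      = ∫⁻ x, (‖h x‖₊ : ℝ≥0∞) ∂π := by
    have e1 : ∀ q : S × S, ∫⁻ ω, (‖h (ω t).1‖₊ : ℝ≥0∞) ∂η q
        = ∫⁻ u, (‖h u‖₊ : ℝ≥0∞) ∂(kpow P t q.1) := fun q => by
      rw [← hmap1 q, lintegral_map hne hc1]
    simp_rw [e1]
    rw [← lintegral_map (Measurable.lintegral_kernel (κ := kpow P t) hne) measurable_fst,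
      Measure.map_fst_prod, measure_univ, one_smul, hbindlin]
  have hfin2 : ∫⁻ q, (∫⁻ ω, (‖h (ω t).2‖₊ : ℝ≥0∞) ∂η q) ∂(π.prod π)
      = ∫⁻ x, (‖h x‖₊ : ℝ≥0∞) ∂π := by
    have e2 : ∀ q : S × S, ∫⁻ ω, (‖h (ω t).2‖₊ : ℝ≥0∞) ∂η q
        = ∫⁻ u, (‖h u‖₊ : ℝ≥0∞) ∂(kpow P t q.2) := fun q => by
      rw [← hmap2 q, lintegral_map hne hc2]
    simp_rw [e2]
    rw [← lintegral_map (Measurable.lintegral_kernel (κ := kpow P t) hne) measurable_snd,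
      Measure.map_snd_prod, measure_univ, one_smul, hbindlin]
  have hGdae : ∀ᵐ q ∂(π.prod π), q ∈ Gd := by
    have h1 : ∀ᵐ q ∂(π.prod π), (∫⁻ ω, (‖h (ω t).1‖₊ : ℝ≥0∞) ∂η q) < ⊤ :=
      ae_lt_top (Measurable.lintegral_kernel (κ := η) hF1) (by rw [hfin1]; exact hL1)
    have h2 : ∀ᵐ q ∂(π.prod π), (∫⁻ ω, (‖h (ω t).2‖₊ : ℝ≥0∞) ∂η q) < ⊤ :=
      ae_lt_top (Measurable.lintegral_kernel (κ := η) hF2) (by rw [hfin2]; exact hL1)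
    filter_upwards [h1, h2] with q hq1 hq2 using ⟨hq1, hq2⟩
  -- key pointwise bound on the good set
  have hkey : ∀ q ∈ Gd, (‖T q.1 - T q.2‖₊ : ℝ≥0∞) ≤ g' q := by
    rintro q ⟨hq1, hq2⟩
    haveI : IsProbabilityMeasure (η q) := (hη q).1
    have hi1 : Integrable (fun ω => h (ω t).1) (η q) :=
      ⟨(hmeas.comp hc1).aestronglyMeasurable, hq1⟩
    have hi2 : Integrable (fun ω => h (ω t).2) (η q) :=
      ⟨(hmeas.comp hc2).aestronglyMeasurable, hq2⟩
    have hT1 : T q.1 = ∫ ω, h (ω t).1 ∂η q := by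
      rw [hTdef]
      show (∫ z, h z ∂(kpow P t q.1)) = _
      rw [← hmap1 q, integral_map hc1.aemeasurable hmeas.aestronglyMeasurable]
    have hT2 : T q.2 = ∫ ω, h (ω t).2 ∂η q := by
      rw [hTdef]
      show (∫ z, h z ∂(kpow P t q.2)) = _
      rw [← hmap2 q, integral_map hc2.aemeasurable hmeas.aestronglyMeasurable]
    rw [hT1, hT2, ← integral_sub hi1 hi2]
    exact enorm_integral_le_lintegral_enorm _
  -- sets
  set Eset : Set (ℕ → S × S) := {ω | (t : ℝ≥0∞) < meetTime ω} with hEdef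
  set Gset : Set (ℕ → S × S) := {ω | h (ω t).1 ≠ h (ω t).2} with hGsetdef
  have hGsetm : MeasurableSet Gset :=
    (measurableSet_eq_fun (hmeas.comp hc1) (hmeas.comp hc2)).compl
  have hGE : ∀ q, η q Gset ≤ η q Eset := by
    intro q
    have hnull := traj_null hη hQd hmeas t q
    have hsub : Gset ⊆ Eset ∪
        {ω | (∃ s ≤ t, (ω s).1 = (ω s).2) ∧ h (ω t).1 ≠ h (ω t).2} := by
      intro ω hω
      by_cases hE : (t : ℝ≥0∞) < meetTime ω
      · exact Or.inl hE
      · exact Or.inr ⟨(not_lt_meetTime_iff ω t).mp hE, hω⟩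
    calc η q Gset ≤ η q Eset + η q {ω | (∃ s ≤ t, (ω s).1 = (ω s).2) ∧
          h (ω t).1 ≠ h (ω t).2} := le_trans (measure_mono hsub) (measure_union_le _ _)
    _ = η q Eset := by rw [hnull, add_zero]
  -- Hölder within each η q
  set M : (S × S) → ℝ≥0∞ :=
    fun q => ∫⁻ ω, (‖h (ω t).1 - h (ω t).2‖₊ : ℝ≥0∞) ^ m ∂η q with hMdef
  have hMmeas : Measurable M :=
    Measurable.lintegral_kernel (κ := η) (hF.pow measurable_const)
  have hgM : ∀ q, g' q ≤ (M q) ^ (1 / m) * (η q Gset) ^ ((m - 1) / m) := by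
    intro q
    haveI : IsProbabilityMeasure (η q) := (hη q).1
    have hmm1 : (0 : ℝ) < m - 1 := by linarith
    have hconj : m.HolderConjugate (m / (m - 1)) := by
      rw [Real.holderConjugate_iff]; constructor
      · exact hm1
      · have h1 : m - 1 ≠ 0 := ne_of_gt hmm1
        field_simp; ring
    have hind : ∀ ω : ℕ → S × S, (‖h (ω t).1 - h (ω t).2‖₊ : ℝ≥0∞)
        = (((fun ω : ℕ → S × S => (‖h (ω t).1 - h (ω t).2‖₊ : ℝ≥0∞)) *
           (Gset.indicator 1) : (ℕ → S × S) → ℝ≥0∞)) ω := by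
      intro ω
      by_cases hω : ω ∈ Gset
      · rw [Pi.mul_apply, Set.indicator_of_mem hω, Pi.one_apply, mul_one]
      · have hωe : h (ω t).1 = h (ω t).2 := not_not.mp hω
        rw [Pi.mul_apply, Set.indicator_of_notMem hω, mul_zero, hωe, sub_self]
        simp
    have H := ENNReal.lintegral_mul_le_Lp_mul_Lq (η q) hconj hF.aemeasurable
      ((measurable_one.indicator hGsetm).aemeasurable)
    have hiset : ∫⁻ ω, (Gset.indicator (1 : (ℕ → S × S) → ℝ≥0∞) ω) ^ (m / (m - 1)) ∂η q
        = η q Gset := by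
      have hpt : ∀ ω, (Gset.indicator (1 : (ℕ → S × S) → ℝ≥0∞) ω) ^ (m / (m - 1))
          = Gset.indicator (1 : (ℕ → S × S) → ℝ≥0∞) ω := by
        intro ω
        by_cases hω : ω ∈ Gset
        · simp [Set.indicator_of_mem hω]
        · simp [Set.indicator_of_notMem hω,
            ENNReal.zero_rpow_of_pos (div_pos hm0 hmm1)]
      simp_rw [hpt]
      exact lintegral_indicator_one hGsetm
    calc g' q = ∫⁻ ω, (((fun ω : ℕ → S × S => (‖h (ω t).1 - h (ω t).2‖₊ : ℝ≥0∞)) *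
          (Gset.indicator 1) : (ℕ → S × S) → ℝ≥0∞)) ω ∂η q := lintegral_congr hind
    _ ≤ (∫⁻ ω, (‖h (ω t).1 - h (ω t).2‖₊ : ℝ≥0∞) ^ m ∂η q) ^ (1 / m) *
          (∫⁻ ω, (Gset.indicator (1 : (ℕ → S × S) → ℝ≥0∞) ω) ^ (m / (m - 1)) ∂η q) ^
            (1 / (m / (m - 1))) := H
    _ = (M q) ^ (1 / m) * (η q Gset) ^ ((m - 1) / m) := by
        rw [hiset, one_div_div]
  -- Step 1 chain
  have step1 : ∫⁻ x, (‖T x‖₊ : ℝ≥0∞) ^ p ∂π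
      ≤ ∫⁻ x, (∫⁻ y, g' (x, y) ∂π) ^ p ∂π := by
    apply lintegral_mono_ae
    have hnull : (π.prod π) Gdᶜ = 0 := ae_iff.mp hGdae
    have hae := (Measure.measure_prod_null hGdmeas.compl).mp hnull
    filter_upwards [hae] with x hx
    have hxae : ∀ᵐ y ∂π, (x, y) ∈ Gd := by
      rw [ae_iff]
      exact hx
    have hx1 : T x = ∫ y, (T x - T y) ∂π := by
      rw [integral_sub (integrable_const _) hTint, hTzero, sub_zero, integral_const,
        probReal_univ, one_smul]
    calc (‖T x‖₊ : ℝ≥0∞) ^ p = (‖∫ y, (T x - T y) ∂π‖₊ : ℝ≥0∞) ^ p := by rw [← hx1]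
    _ ≤ (∫⁻ y, (‖T x - T y‖₊ : ℝ≥0∞) ∂π) ^ p :=
        ENNReal.rpow_le_rpow (enorm_integral_le_lintegral_enorm _) hp0.le
    _ ≤ (∫⁻ y, g' (x, y) ∂π) ^ p := by
        refine ENNReal.rpow_le_rpow (lintegral_mono_ae ?_) hp0.le
        filter_upwards [hxae] with y hy using hkey (x, y) hy
  have step2 : ∫⁻ x, (∫⁻ y, g' (x, y) ∂π) ^ p ∂π
      ≤ ∫⁻ x, ∫⁻ y, g' (x, y) ^ p ∂π ∂π :=
    lintegral_mono fun x => lintegral_rpow_le_lintegral_rpow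
      ((hgmeas.comp measurable_prodMk_left).aemeasurable) hp
  have step3 : ∫⁻ x, ∫⁻ y, g' (x, y) ^ p ∂π ∂π = ∫⁻ q, g' q ^ p ∂(π.prod π) :=
    (lintegral_prod _ ((hgmeas.pow measurable_const).aemeasurable)).symm
  -- Pointwise power bound
  have step4 : ∫⁻ q, g' q ^ p ∂(π.prod π)
      ≤ ∫⁻ q, (M q) ^ (p / m) * (η q Gset) ^ ((m - 1) / m * p) ∂(π.prod π) := by
    refine lintegral_mono fun q => ?_
    calc g' q ^ p ≤ ((M q) ^ (1 / m) * (η q Gset) ^ ((m - 1) / m)) ^ p :=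
          ENNReal.rpow_le_rpow (hgM q) hp0.le
    _ = (M q) ^ (p / m) * (η q Gset) ^ ((m - 1) / m * p) := by
        rw [ENNReal.mul_rpow_of_nonneg _ _ hp0.le, ← ENNReal.rpow_mul, ← ENNReal.rpow_mul,
          show 1 / m * p = p / m by ring]
  -- Hölder over π.prod π
  have hconj2 : (m / p).HolderConjugate (m / (m - p)) := by
    rw [Real.holderConjugate_iff]; constructor
    · exact (one_lt_div hp0).mpr hpm
    · rw [inv_div, inv_div, ← add_div,
        show p + (m - p) = m by ring, div_self (ne_of_gt hm0)]
  have step5 : ∫⁻ q, (M q) ^ (p / m) * (η q Gset) ^ ((m - 1) / m * p) ∂(π.prod π)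
      ≤ (∫⁻ q, M q ∂(π.prod π)) ^ (p / m) *
        (∫⁻ q, (η q Gset) ^ ((m - 1) / m * p * (m / (m - p))) ∂(π.prod π)) ^ ((m - p) / m) := by
    have hf5 : Measurable fun q : S × S => (M q) ^ (p / m) :=
      hMmeas.pow measurable_const
    have hg5 : Measurable fun q : S × S => (η q Gset) ^ ((m - 1) / m * p) :=
      (η.measurable_coe hGsetm).pow measurable_const
    have H := ENNReal.lintegral_mul_le_Lp_mul_Lq (π.prod π) hconj2
      hf5.aemeasurable hg5.aemeasurable
    have e1 : ∫⁻ q, ((M q) ^ (p / m)) ^ (m / p) ∂(π.prod π) = ∫⁻ q, M q ∂(π.prod π) := by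
      apply lintegral_congr; intro q
      rw [← ENNReal.rpow_mul, show p / m * (m / p) = 1 by
        field_simp, ENNReal.rpow_one]
    have e2 : ∀ q : S × S, (((η q Gset) ^ ((m - 1) / m * p)) ^ (m / (m - p)))
        = (η q Gset) ^ ((m - 1) / m * p * (m / (m - p))) := fun q =>
      (ENNReal.rpow_mul _ _ _).symm
    calc ∫⁻ q, (M q) ^ (p / m) * (η q Gset) ^ ((m - 1) / m * p) ∂(π.prod π)
        ≤ (∫⁻ q, ((M q) ^ (p / m)) ^ (m / p) ∂(π.prod π)) ^ (1 / (m / p)) *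
          (∫⁻ q, (((η q Gset) ^ ((m - 1) / m * p)) ^ (m / (m - p))) ∂(π.prod π)) ^
            (1 / (m / (m - p))) := H
    _ = (∫⁻ q, M q ∂(π.prod π)) ^ (p / m) *
        (∫⁻ q, (η q Gset) ^ ((m - 1) / m * p * (m / (m - p))) ∂(π.prod π)) ^ ((m - p) / m) := by
        simp_rw [e2]
        rw [e1, one_div_div, one_div_div]
  have step6 : (∫⁻ q, (η q Gset) ^ ((m - 1) / m * p * (m / (m - p))) ∂(π.prod π))
      ≤ ∫⁻ q, η q Eset ∂(π.prod π) := by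
    refine lintegral_mono fun q => ?_
    haveI : IsProbabilityMeasure (η q) := (hη q).1
    have hexp : (m - 1) / m * p * (m / (m - p)) = p * (m - 1) / (m - p) := by
      have hm0' : m ≠ 0 := ne_of_gt hm0
      have hmp : m - p ≠ 0 := ne_of_gt (by linarith)
      field_simp
    have he1 : (1 : ℝ) ≤ (m - 1) / m * p * (m / (m - p)) := by
      rw [hexp, le_div_iff₀ (by linarith : (0 : ℝ) < m - p)]
      nlinarith
    calc (η q Gset) ^ ((m - 1) / m * p * (m / (m - p)))
        ≤ (η q Gset) ^ (1 : ℝ) :=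
          ENNReal.rpow_le_rpow_of_exponent_ge prob_le_one he1
    _ = η q Gset := ENNReal.rpow_one _
    _ ≤ η q Eset := hGE q
  -- the mass term
  have hMint : ∫⁻ q, M q ∂(π.prod π)
      = ∫⁻ z, (‖h z.1 - h z.2‖₊ : ℝ≥0∞) ^ m
          ∂((π.prod π).bind (fun q => kpow Q t q)) := by
    have hzmeas : Measurable fun z : S × S => (‖h z.1 - h z.2‖₊ : ℝ≥0∞) ^ m :=
      (((hmeas.comp measurable_fst).sub (hmeas.comp measurable_snd)).enorm).pow
        measurable_const
    rw [MeasureTheory.Measure.lintegral_bind (kpow Q t).measurable.aemeasurable hzmeas.aemeasurable]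
    apply lintegral_congr; intro q
    rw [hMdef]
    show (∫⁻ ω, (‖h (ω t).1 - h (ω t).2‖₊ : ℝ≥0∞) ^ m ∂η q) = _
    rw [← htraj q t, lintegral_map hzmeas (measurable_pi_apply t)]
  have hterm1 : ∫⁻ z, (‖h z.1‖₊ : ℝ≥0∞) ^ m ∂((π.prod π).bind (fun q => kpow Q t q))
      = Hm := by
    have hz1 : Measurable fun z : S × S => (‖h z.1‖₊ : ℝ≥0∞) ^ m :=
      ((hmeas.comp measurable_fst).enorm).pow measurable_const
    rw [MeasureTheory.Measure.lintegral_bind (kpow Q t).measurable.aemeasurable hz1.aemeasurable]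
    have e1 : ∀ q : S × S, ∫⁻ z, (‖h z.1‖₊ : ℝ≥0∞) ^ m ∂(kpow Q t q)
        = ∫⁻ u, (‖h u‖₊ : ℝ≥0∞) ^ m ∂(kpow P t q.1) := fun q => by
      rw [← kpow_map_fst hQ1 q t, lintegral_map (hne.pow measurable_const) measurable_fst]
    simp_rw [e1]
    rw [← lintegral_map (Measurable.lintegral_kernel (κ := kpow P t)
        (hne.pow measurable_const)) measurable_fst,
      Measure.map_fst_prod, measure_univ, one_smul, hbindm]
  have hterm2 : ∫⁻ z, (‖h z.2‖₊ : ℝ≥0∞) ^ m ∂((π.prod π).bind (fun q => kpow Q t q))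
      = Hm := by
    have hz2 : Measurable fun z : S × S => (‖h z.2‖₊ : ℝ≥0∞) ^ m :=
      ((hmeas.comp measurable_snd).enorm).pow measurable_const
    rw [MeasureTheory.Measure.lintegral_bind (kpow Q t).measurable.aemeasurable hz2.aemeasurable]
    have e2 : ∀ q : S × S, ∫⁻ z, (‖h z.2‖₊ : ℝ≥0∞) ^ m ∂(kpow Q t q)
        = ∫⁻ u, (‖h u‖₊ : ℝ≥0∞) ^ m ∂(kpow P t q.2) := fun q => by
      rw [← kpow_map_snd hQ2 q t, lintegral_map (hne.pow measurable_const) measurable_snd]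
    simp_rw [e2]
    rw [← lintegral_map (Measurable.lintegral_kernel (κ := kpow P t)
        (hne.pow measurable_const)) measurable_snd,
      Measure.map_snd_prod, measure_univ, one_smul, hbindm]
  have hMk : (∫⁻ q, M q ∂(π.prod π)) ^ (1 / m) ≤ 2 * Hm ^ (1 / m) := by
    rw [hMint]
    set lam := (π.prod π).bind (fun q => kpow Q t q) with hlam
    have hmono : ∫⁻ z, (‖h z.1 - h z.2‖₊ : ℝ≥0∞) ^ m ∂lam
        ≤ ∫⁻ z, ((fun z : S × S => (‖h z.1‖₊ : ℝ≥0∞)) +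
            fun z : S × S => (‖h z.2‖₊ : ℝ≥0∞)) z ^ m ∂lam := by
      refine lintegral_mono fun z => ENNReal.rpow_le_rpow ?_ hm0.le
      simp only [Pi.add_apply]
      exact_mod_cast nnnorm_sub_le (h z.1) (h z.2)
    have hadd := ENNReal.lintegral_Lp_add_le (μ := lam)
      ((hmeas.comp measurable_fst).enorm.aemeasurable)
      ((hmeas.comp measurable_snd).enorm.aemeasurable) hm
    calc (∫⁻ z, (‖h z.1 - h z.2‖₊ : ℝ≥0∞) ^ m ∂lam) ^ (1 / m)
        ≤ (∫⁻ z, ((fun z : S × S => (‖h z.1‖₊ : ℝ≥0∞)) +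
            fun z : S × S => (‖h z.2‖₊ : ℝ≥0∞)) z ^ m ∂lam) ^ (1 / m) :=
          ENNReal.rpow_le_rpow hmono (by positivity)
    _ ≤ (∫⁻ z, (‖h z.1‖₊ : ℝ≥0∞) ^ m ∂lam) ^ (1 / m) +
        (∫⁻ z, (‖h z.2‖₊ : ℝ≥0∞) ^ m ∂lam) ^ (1 / m) := hadd
    _ = Hm ^ (1 / m) + Hm ^ (1 / m) := by rw [hlam, hterm1, hterm2]
    _ = 2 * Hm ^ (1 / m) := (two_mul _).symm
  -- assemble
  have main : ∫⁻ x, (‖T x‖₊ : ℝ≥0∞) ^ p ∂π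
      ≤ (∫⁻ q, M q ∂(π.prod π)) ^ (p / m) *
        (∫⁻ q, η q Eset ∂(π.prod π)) ^ ((m - p) / m) := by
    calc ∫⁻ x, (‖T x‖₊ : ℝ≥0∞) ^ p ∂π
        ≤ ∫⁻ x, (∫⁻ y, g' (x, y) ∂π) ^ p ∂π := step1
    _ ≤ ∫⁻ x, ∫⁻ y, g' (x, y) ^ p ∂π ∂π := step2
    _ = ∫⁻ q, g' q ^ p ∂(π.prod π) := step3
    _ ≤ ∫⁻ q, (M q) ^ (p / m) * (η q Gset) ^ ((m - 1) / m * p) ∂(π.prod π) := step4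
    _ ≤ (∫⁻ q, M q ∂(π.prod π)) ^ (p / m) *
        (∫⁻ q, (η q Gset) ^ ((m - 1) / m * p * (m / (m - p))) ∂(π.prod π)) ^
          ((m - p) / m) := step5
    _ ≤ (∫⁻ q, M q ∂(π.prod π)) ^ (p / m) *
        (∫⁻ q, η q Eset ∂(π.prod π)) ^ ((m - p) / m) :=
        mul_le_mul' le_rfl (ENNReal.rpow_le_rpow step6 (div_nonneg (by linarith) hm0.le))
  calc (∫⁻ x, (‖T x‖₊ : ℝ≥0∞) ^ p ∂π) ^ (1 / p)
      ≤ ((∫⁻ q, M q ∂(π.prod π)) ^ (p / m) *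
        (∫⁻ q, η q Eset ∂(π.prod π)) ^ ((m - p) / m)) ^ (1 / p) :=
        ENNReal.rpow_le_rpow main (by positivity)
  _ = (∫⁻ q, M q ∂(π.prod π)) ^ (1 / m) *
      (∫⁻ q, η q Eset ∂(π.prod π)) ^ ((m - p) / (m * p)) := by
      rw [ENNReal.mul_rpow_of_nonneg _ _ (by positivity : (0:ℝ) ≤ 1 / p),
        ← ENNReal.rpow_mul, ← ENNReal.rpow_mul,
        show p / m * (1 / p) = 1 / m by field_simp,
        show (m - p) / m * (1 / p) = (m - p) / (m * p) by rw [div_mul_div_comm, mul_one]]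
  _ ≤ (2 * Hm ^ (1 / m)) * (∫⁻ q, η q Eset ∂(π.prod π)) ^ ((m - p) / (m * p)) :=
      mul_le_mul' hMk le_rfl
  _ = 2 * (∫⁻ q, η q Eset ∂(π.prod π)) ^ ((m - p) / (m * p)) * Hm ^ (1 / m) := by
      rw [mul_right_comm]
end

section
/- Let P be a Markov kernel on X and G : X×X → [0,1] measurable; for a probability measure ν on X and n ∈ ℕ define S_ν(n) = E_ν[∏_{i=0}^{n−1} G(X_i, X_{i+1})], the expectation under the law of the Markov chain (X_t)_{t≥0} with kernel P and initial distribution ν. Then for any probability measure μ on X, any x ∈ X, any m ∈ ℕ and any k ∈ {0,…,m}: S_{δ_x}(m) ≤ S_μ(m−k) + 2 ‖P^k(x,·) − μ‖_TV. -/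
open MeasureTheory ProbabilityTheory ENNReal Filter Topology

section AuxProofs

variable {S : Type*} [MeasurableSpace S]

variable {S : Type*} [MeasurableSpace S]

lemma isMarkovKernel_kpow (P : Kernel S S) [IsMarkovKernel P] : ∀ k, IsMarkovKernel (kpow P k)
  | 0 => by simp only [kpow]; infer_instance
  | (k+1) => by
      simp only [kpow]
      haveI := isMarkovKernel_kpow P k
      infer_instance

lemma kpow_comm (P : Kernel S S) [IsMarkovKernel P] : ∀ k, kpow P (k+1) = P ∘ₖ kpow P k
  | 0 => by simp only [kpow]; rw [Kernel.id_comp, Kernel.comp_id]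
  | (k+1) => by
      haveI := isMarkovKernel_kpow P k
      have ih := kpow_comm P k
      calc kpow P (k+2) = kpow P (k+1) ∘ₖ P := by simp only [kpow]
        _ = (P ∘ₖ kpow P k) ∘ₖ P := by rw [ih]
        _ = P ∘ₖ (kpow P k ∘ₖ P) := Kernel.comp_assoc P (kpow P k) P
        _ = P ∘ₖ kpow P (k+1) := by simp only [kpow]

lemma integrable_of_bound {α : Type*} [MeasurableSpace α] (μ : Measure α) [IsFiniteMeasure μ]
    {f : α → ℝ} (hf : Measurable f) (h : ∀ a, |f a| ≤ 1) : Integrable f μ := by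
  refine (integrable_const (1 : ℝ)).mono' hf.aestronglyMeasurable (ae_of_all _ fun a => ?_)
  simpa [Real.norm_eq_abs] using h a

lemma integral_bind01 {β : Type*} [MeasurableSpace β] (ρ : Measure S) [IsFiniteMeasure ρ]
    (κ : Kernel S β) [IsMarkovKernel κ] {f : β → ℝ} (hf : Measurable f)
    (h01 : ∀ b, f b ∈ Set.Icc (0:ℝ) 1) :
    ∫ b, f b ∂(ρ.bind fun z => κ z) = ∫ a, ∫ b, f b ∂(κ a) ∂ρ := by
  have hc : Measurable (fun z => κ z : S → Measure β) := κ.measurable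
  have hfo : Measurable fun b => ENNReal.ofReal (f b) := hf.ennreal_ofReal
  have hg : Measurable fun a => ∫⁻ b, ENNReal.ofReal (f b) ∂κ a :=
    (Measure.measurable_lintegral hfo).comp hc
  have hgle : ∀ a, (∫⁻ b, ENNReal.ofReal (f b) ∂κ a) ≤ 1 := fun a => by
    calc ∫⁻ b, ENNReal.ofReal (f b) ∂κ a ≤ ∫⁻ _, 1 ∂κ a :=
          lintegral_mono fun b => ENNReal.ofReal_le_one.mpr (h01 b).2
      _ = 1 := by simp
  rw [integral_eq_lintegral_of_nonneg_ae (ae_of_all _ fun b => (h01 b).1)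
        hf.aestronglyMeasurable, Measure.lintegral_bind hc.aemeasurable hfo.aemeasurable]
  have hin : ∀ a, ∫ b, f b ∂κ a = (∫⁻ b, ENNReal.ofReal (f b) ∂κ a).toReal := fun a =>
    integral_eq_lintegral_of_nonneg_ae (ae_of_all _ fun b => (h01 b).1) hf.aestronglyMeasurable
  simp_rw [hin]
  rw [integral_toReal hg.aemeasurable
    (ae_of_all _ fun a => lt_of_le_of_lt (hgle a) ENNReal.one_lt_top)]

lemma abs_le_tvDist (η μ : Measure S) [IsProbabilityMeasure η] [IsProbabilityMeasure μ]
    {A : Set S} (hA : MeasurableSet A) :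
    |(η A).toReal - (μ A).toReal| ≤ tvDist η μ := by
  have hbdd : BddAbove (Set.range fun A : {A : Set S // MeasurableSet A} =>
      |(η A.1).toReal - (μ A.1).toReal|) := by
    refine ⟨2, ?_⟩
    rintro r ⟨B, rfl⟩
    have h1 : (η B.1).toReal ≤ 1 := by
      have := prob_le_one (μ := η) (s := B.1)
      simpa using ENNReal.toReal_mono one_ne_top this
    have h2 : (μ B.1).toReal ≤ 1 := by
      have := prob_le_one (μ := μ) (s := B.1)
      simpa using ENNReal.toReal_mono one_ne_top this
    have h3 : 0 ≤ (η B.1).toReal := ENNReal.toReal_nonneg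
    have h4 : 0 ≤ (μ B.1).toReal := ENNReal.toReal_nonneg
    rw [abs_le]
    constructor <;> linarith
  exact le_ciSup hbdd ⟨A, hA⟩

lemma tvDist_nonneg (η μ : Measure S) [IsProbabilityMeasure η] [IsProbabilityMeasure μ] :
    0 ≤ tvDist η μ := by
  have := abs_le_tvDist η μ MeasurableSet.empty
  simp only [measure_empty] at this
  simpa using this

lemma integral_le_add_tv (η μ : Measure S) [IsProbabilityMeasure η] [IsProbabilityMeasure μ]
    {f : S → ℝ} (hf : Measurable f) (h01 : ∀ z, f z ∈ Set.Icc (0:ℝ) 1) :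
    ∫ z, f z ∂η ≤ ∫ z, f z ∂μ + 2 * tvDist η μ := by
  obtain ⟨A, hA, h1, h2⟩ := hahn_decomposition (μ := η) (ν := μ)
  set F : S → ℝ≥0∞ := fun z => ENNReal.ofReal (f z) with hF
  have hFm : Measurable F := hf.ennreal_ofReal
  have hF1 : ∀ z, F z ≤ 1 := fun z => ENNReal.ofReal_le_one.mpr (h01 z).2
  have hbnd0 : ∀ (ν : Measure S), IsProbabilityMeasure ν → ∫⁻ z, F z ∂ν ≤ 1 := by
    intro ν hν
    calc ∫⁻ z, F z ∂ν ≤ ∫⁻ _, 1 ∂ν := lintegral_mono hF1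
      _ = 1 := by simp
  have hle : μ.restrict A ≤ η.restrict A := by
    refine Measure.le_iff.mpr fun t ht => ?_
    rw [Measure.restrict_apply ht, Measure.restrict_apply ht]
    exact h1 (t ∩ A) (ht.inter hA) Set.inter_subset_right
  have hle' : η.restrict Aᶜ ≤ μ.restrict Aᶜ := by
    refine Measure.le_iff.mpr fun t ht => ?_
    rw [Measure.restrict_apply ht, Measure.restrict_apply ht]
    exact h2 (t ∩ Aᶜ) (ht.inter hA.compl) Set.inter_subset_right
  have hμA : μ A ≤ η A := h1 A hA subset_rfl
  have hkey : ∫⁻ z, F z ∂η ≤ (η A - μ A) + ∫⁻ z, F z ∂μ := by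
    rw [← lintegral_add_compl F hA (μ := η), ← lintegral_add_compl F hA (μ := μ)]
    have hA1 : ∫⁻ z in A, F z ∂η ≤ (η A - μ A) + ∫⁻ z in A, F z ∂μ := by
      conv_lhs => rw [← Measure.sub_add_cancel_of_le hle]
      rw [lintegral_add_measure]
      gcongr
      calc ∫⁻ z, F z ∂(η.restrict A - μ.restrict A) ≤ ∫⁻ _, 1 ∂(η.restrict A - μ.restrict A) :=
            lintegral_mono hF1
        _ = (η.restrict A - μ.restrict A) Set.univ := by simp
        _ = η.restrict A Set.univ - μ.restrict A Set.univ :=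
            Measure.sub_apply MeasurableSet.univ hle
        _ = η A - μ A := by simp [Measure.restrict_apply_univ]
    have hA2 : ∫⁻ z in Aᶜ, F z ∂η ≤ ∫⁻ z in Aᶜ, F z ∂μ := lintegral_mono' hle' le_rfl
    calc ∫⁻ z in A, F z ∂η + ∫⁻ z in Aᶜ, F z ∂η
        ≤ ((η A - μ A) + ∫⁻ z in A, F z ∂μ) + ∫⁻ z in Aᶜ, F z ∂μ := add_le_add hA1 hA2
      _ = (η A - μ A) + (∫⁻ z in A, F z ∂μ + ∫⁻ z in Aᶜ, F z ∂μ) := by ring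
  have hηe : ∫ z, f z ∂η = (∫⁻ z, F z ∂η).toReal :=
    integral_eq_lintegral_of_nonneg_ae (ae_of_all _ fun z => (h01 z).1) hf.aestronglyMeasurable
  have hμe : ∫ z, f z ∂μ = (∫⁻ z, F z ∂μ).toReal :=
    integral_eq_lintegral_of_nonneg_ae (ae_of_all _ fun z => (h01 z).1) hf.aestronglyMeasurable
  have hsub_ne : η A - μ A ≠ ⊤ := ne_top_of_le_ne_top (measure_ne_top η A) tsub_le_self
  have hμint_ne : ∫⁻ z, F z ∂μ ≠ ⊤ := ne_top_of_le_ne_top one_ne_top (hbnd0 μ inferInstance)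
  have h5 : (η A - μ A).toReal ≤ tvDist η μ := by
    rw [ENNReal.toReal_sub_of_le hμA (measure_ne_top η A)]
    exact le_trans (le_abs_self _) (abs_le_tvDist η μ hA)
  have h6 : tvDist η μ ≤ 2 * tvDist η μ := by
    have := tvDist_nonneg η μ; linarith
  calc ∫ z, f z ∂η = (∫⁻ z, F z ∂η).toReal := hηe
    _ ≤ ((η A - μ A) + ∫⁻ z, F z ∂μ).toReal := ENNReal.toReal_mono
        (by exact ENNReal.add_ne_top.mpr ⟨hsub_ne, hμint_ne⟩) hkey
    _ = (η A - μ A).toReal + (∫⁻ z, F z ∂μ).toReal := ENNReal.toReal_add hsub_ne hμint_ne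
    _ ≤ tvDist η μ + ∫ z, f z ∂μ := by rw [hμe]; exact add_le_add_left h5 _
    _ ≤ ∫ z, f z ∂μ + 2 * tvDist η μ := by linarith


variable {S : Type*} [MeasurableSpace S]

lemma integrable_of_bound' {α : Type*} [MeasurableSpace α] (μ : Measure α) [IsFiniteMeasure μ]
    {f : α → ℝ} (hf : Measurable f) (h : ∀ a, |f a| ≤ 1) : Integrable f μ := by
  refine (integrable_const (1 : ℝ)).mono' hf.aestronglyMeasurable (ae_of_all _ fun a => ?_)
  simpa [Real.norm_eq_abs] using h a

lemma traj_step (P : Kernel S S) [IsMarkovKernel P] (ξ : Kernel S (ℕ → S))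
    (hξ : ∀ x : S, IsTrajMeasure P (MeasureTheory.Measure.dirac x) (ξ x))
    (x : S) (n : ℕ) (H : (Fin (n + 1) → S) × S → ℝ) (hH : Measurable H)
    (hHb : ∀ p, |H p| ≤ 1) :
    ∫ ω, H ((fun i : Fin (n + 1) => ω (i : ℕ)), ω (n + 1)) ∂(ξ x) =
      ∫ ω, ∫ s, H ((fun i : Fin (n + 1) => ω (i : ℕ)), s) ∂(P (ω n)) ∂(ξ x) := by
  haveI : IsProbabilityMeasure (ξ x) := (hξ x).1
  have hpre_meas : Measurable (fun ω : ℕ → S => fun i : Fin (n + 1) => ω (i : ℕ)) :=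
    measurable_pi_lambda _ fun i => measurable_pi_apply _
  have hF : Measurable (fun ω : ℕ → S =>
      ((fun i : Fin (n + 1) => ω (i : ℕ)), ω (n + 1))) :=
    hpre_meas.prodMk (measurable_pi_apply _)
  set L := (ξ x).map (fun ω => fun i : Fin (n + 1) => ω (i : ℕ)) with hL
  haveI : IsProbabilityMeasure L := Measure.isProbabilityMeasure_map hpre_meas.aemeasurable
  set K := P.comap (fun v : Fin (n + 1) → S => v (Fin.last n)) (measurable_pi_apply _) with hK
  haveI : IsMarkovKernel K := Kernel.IsMarkovKernel.comap _ _
  have h3 : (ξ x).map (fun ω => ((fun i : Fin (n + 1) => ω (i : ℕ)), ω (n + 1))) = L.compProd K :=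
    (hξ x).2.2 n
  haveI : IsProbabilityMeasure
      ((ξ x).map (fun ω => ((fun i : Fin (n + 1) => ω (i : ℕ)), ω (n + 1)))) :=
    Measure.isProbabilityMeasure_map hF.aemeasurable
  have hint : Integrable H
      ((ξ x).map (fun ω => ((fun i : Fin (n + 1) => ω (i : ℕ)), ω (n + 1)))) :=
    integrable_of_bound' _ hH hHb
  have hsm : StronglyMeasurable fun v : Fin (n + 1) → S => ∫ s, H (v, s) ∂K v :=
    hH.stronglyMeasurable.integral_kernel_prod_right' (κ := K)
  calc ∫ ω, H ((fun i : Fin (n + 1) => ω (i : ℕ)), ω (n + 1)) ∂(ξ x)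
      = ∫ p, H p ∂((ξ x).map (fun ω => ((fun i : Fin (n + 1) => ω (i : ℕ)), ω (n + 1)))) :=
        (integral_map hF.aemeasurable hH.aestronglyMeasurable).symm
    _ = ∫ p, H p ∂(L.compProd K) := by rw [h3]
    _ = ∫ v, ∫ s, H (v, s) ∂K v ∂L := Measure.integral_compProd (h3 ▸ hint)
    _ = ∫ ω, ∫ s, H ((fun i : Fin (n + 1) => ω (i : ℕ)), s)
          ∂K (fun i : Fin (n + 1) => ω (i : ℕ)) ∂(ξ x) := by
        rw [hL]
        exact integral_map hpre_meas.aemeasurable hsm.aestronglyMeasurable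
    _ = ∫ ω, ∫ s, H ((fun i : Fin (n + 1) => ω (i : ℕ)), s) ∂(P (ω n)) ∂(ξ x) := by
        refine integral_congr_ae (ae_of_all _ fun ω => ?_)
        simp [hK, Kernel.comap_apply]


lemma isMarkovKernel_kpow' (P : Kernel S S) [IsMarkovKernel P] : ∀ k, IsMarkovKernel (kpow P k)
  | 0 => by simp only [kpow]; infer_instance
  | (k+1) => by
      simp only [kpow]
      haveI := isMarkovKernel_kpow' P k
      infer_instance

lemma kpow_comm' (P : Kernel S S) [IsMarkovKernel P] : ∀ k, kpow P (k+1) = P ∘ₖ kpow P k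
  | 0 => by simp only [kpow]; rw [Kernel.id_comp, Kernel.comp_id]
  | (k+1) => by
      haveI := isMarkovKernel_kpow' P k
      have ih := kpow_comm' P k
      calc kpow P (k+2) = kpow P (k+1) ∘ₖ P := by simp only [kpow]
        _ = (P ∘ₖ kpow P k) ∘ₖ P := by rw [ih]
        _ = P ∘ₖ (kpow P k ∘ₖ P) := Kernel.comp_assoc P (kpow P k) P
        _ = P ∘ₖ kpow P (k+1) := by simp only [kpow]


/-- One-step transition operator on functions: `Psi g z = ∫ g dP(z)`. -/
noncomputable def Psi (P : Kernel S S) (g : S → ℝ) : S → ℝ := fun z => ∫ s, g s ∂P z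

lemma Psi_meas (P : Kernel S S) [IsMarkovKernel P] {g : S → ℝ} (hg : Measurable g)
    (h01 : ∀ z, g z ∈ Set.Icc (0:ℝ) 1) :
    Measurable (Psi P g) ∧ ∀ z, Psi P g z ∈ Set.Icc (0:ℝ) 1 := by
  constructor
  · exact (MeasureTheory.StronglyMeasurable.integral_kernel_prod_right' (κ := P)
      (f := fun q : S × S => g q.2) (hg.comp measurable_snd).stronglyMeasurable).measurable
  · intro z
    constructor
    · exact integral_nonneg fun s => (h01 s).1
    · calc ∫ s, g s ∂P z ≤ ∫ _, (1:ℝ) ∂P z := by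
            refine integral_mono (integrable_of_bound' _ hg ?_) (integrable_const 1)
              (fun s => (h01 s).2)
            intro a; rw [abs_le]; exact ⟨by linarith [(h01 a).1], (h01 a).2⟩
        _ = 1 := by simp

lemma traj_marginal (P : Kernel S S) [IsMarkovKernel P] (ξ : Kernel S (ℕ → S))
    (hξ : ∀ x : S, IsTrajMeasure P (MeasureTheory.Measure.dirac x) (ξ x)) :
    ∀ (k : ℕ) (g : S → ℝ), Measurable g → (∀ z, g z ∈ Set.Icc (0:ℝ) 1) → ∀ x : S,
      ∫ ω, g (ω k) ∂(ξ x) = ∫ z, g z ∂(kpow P k x) := by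
  intro k
  induction k with
  | zero =>
      intro g hg h01 x
      have h0 : (ξ x).map (fun ω => ω 0) = Measure.dirac x := (hξ x).2.1
      calc ∫ ω, g (ω 0) ∂(ξ x) = ∫ y, g y ∂((ξ x).map (fun ω => ω 0)) :=
            (integral_map (measurable_pi_apply 0).aemeasurable
              hg.stronglyMeasurable.aestronglyMeasurable).symm
        _ = ∫ y, g y ∂(Measure.dirac x) := by rw [h0]
        _ = g x := integral_dirac' _ _ hg.stronglyMeasurable
        _ = ∫ z, g z ∂(kpow P 0 x) := by
            simp only [kpow, Kernel.id_apply]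
            exact (integral_dirac' _ _ hg.stronglyMeasurable).symm
  | succ k ih =>
      intro g hg h01 x
      haveI := isMarkovKernel_kpow' P k
      obtain ⟨hPm, hP01⟩ := Psi_meas P hg h01
      have hstep := traj_step P ξ hξ x k (fun p => g p.2) (hg.comp measurable_snd)
        (fun p => by rw [abs_le]; exact ⟨by linarith [(h01 p.2).1], (h01 p.2).2⟩)
      calc ∫ ω, g (ω (k+1)) ∂(ξ x) = ∫ ω, ∫ s, g s ∂(P (ω k)) ∂(ξ x) := hstep
        _ = ∫ z, Psi P g z ∂(kpow P k x) := ih (Psi P g) hPm hP01 x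
        _ = ∫ z, g z ∂(kpow P (k+1) x) := by
            rw [kpow_comm' P k, Kernel.comp_apply]
            exact (integral_bind01 (kpow P k x) P hg h01).symm


/-- The sub-Markov operator `Phi g z = ∫ G(z,s) g(s) dP(z)`. -/
noncomputable def PhiOp (P : Kernel S S) (G : S × S → ℝ) (g : S → ℝ) : S → ℝ :=
  fun z => ∫ s, G (z, s) * g s ∂P z

lemma PhiOp_meas (P : Kernel S S) [IsMarkovKernel P] (G : S × S → ℝ) (hGm : Measurable G)
    (hG01 : ∀ q, G q ∈ Set.Icc (0:ℝ) 1) {g : S → ℝ} (hg : Measurable g)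
    (h01 : ∀ z, g z ∈ Set.Icc (0:ℝ) 1) :
    Measurable (PhiOp P G g) ∧ ∀ z, PhiOp P G g z ∈ Set.Icc (0:ℝ) 1 := by
  have hfm : Measurable fun q : S × S => G q * g q.2 := hGm.mul (hg.comp measurable_snd)
  have hf01 : ∀ q : S × S, G q * g q.2 ∈ Set.Icc (0:ℝ) 1 := fun q => by
    constructor
    · exact mul_nonneg (hG01 q).1 (h01 q.2).1
    · nlinarith [(hG01 q).1, (hG01 q).2, (h01 q.2).1, (h01 q.2).2]
  constructor
  · exact (MeasureTheory.StronglyMeasurable.integral_kernel_prod_right' (κ := P)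
      hfm.stronglyMeasurable).measurable
  · intro z
    constructor
    · exact integral_nonneg fun s => (hf01 (z, s)).1
    · calc ∫ s, G (z, s) * g s ∂P z ≤ ∫ _, (1:ℝ) ∂P z := by
            refine integral_mono (integrable_of_bound' _
              (hfm.comp (measurable_const.prodMk measurable_id)) ?_) (integrable_const 1)
              (fun s => (hf01 (z, s)).2)
            intro a
            rw [abs_le]
            exact ⟨by linarith [(hf01 (z, a)).1], (hf01 (z, a)).2⟩
        _ = 1 := by simp

lemma PhiOp_iter_meas (P : Kernel S S) [IsMarkovKernel P] (G : S × S → ℝ) (hGm : Measurable G)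
    (hG01 : ∀ q, G q ∈ Set.Icc (0:ℝ) 1) (n : ℕ) :
    Measurable ((PhiOp P G)^[n] (fun _ => (1:ℝ))) ∧
      ∀ z, (PhiOp P G)^[n] (fun _ => (1:ℝ)) z ∈ Set.Icc (0:ℝ) 1 := by
  induction n with
  | zero => exact ⟨measurable_const, fun z => by simp⟩
  | succ n ih =>
      rw [Function.iterate_succ_apply']
      exact PhiOp_meas P G hGm hG01 ih.1 ih.2

lemma traj_Vrec (P : Kernel S S) [IsMarkovKernel P] (ξ : Kernel S (ℕ → S))
    (hξ : ∀ x : S, IsTrajMeasure P (MeasureTheory.Measure.dirac x) (ξ x))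
    (G : S × S → ℝ) (hGm : Measurable G) (hG01 : ∀ q, G q ∈ Set.Icc (0:ℝ) 1) :
    ∀ (n : ℕ) (g : S → ℝ), Measurable g → (∀ z, g z ∈ Set.Icc (0:ℝ) 1) → ∀ (k : ℕ) (x : S),
      ∫ ω, (∏ i ∈ Finset.range n, G (ω (k + i), ω (k + i + 1))) * g (ω (k + n)) ∂(ξ x) =
        ∫ z, (PhiOp P G)^[n] g z ∂(kpow P k x) := by
  intro n
  induction n with
  | zero =>
      intro g hg h01 k x
      simp only [Finset.range_zero, Finset.prod_empty, one_mul, Nat.add_zero,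
        Function.iterate_zero_apply]
      exact traj_marginal P ξ hξ k g hg h01 x
  | succ n ih =>
      intro g hg h01 k x
      obtain ⟨hPm, hP01⟩ := PhiOp_meas P G hGm hG01 hg h01
      set N := k + n with hN
      set H : (Fin (N + 1) → S) × S → ℝ := fun p =>
        (∏ i ∈ Finset.range n,
            G (p.1 ⟨min (k + i) N, by omega⟩, p.1 ⟨min (k + i + 1) N, by omega⟩)) *
          (G (p.1 (Fin.last N), p.2) * g p.2) with hHdef
      have hprod_mem : ∀ (w : Fin (N+1) → S),
          (∏ i ∈ Finset.range n,
            G (w ⟨min (k + i) N, by omega⟩, w ⟨min (k + i + 1) N, by omega⟩)) ∈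
              Set.Icc (0:ℝ) 1 := fun w =>
        ⟨Finset.prod_nonneg fun i _ => (hG01 _).1,
         Finset.prod_le_one (fun i _ => (hG01 _).1) (fun i _ => (hG01 _).2)⟩
      have hH01 : ∀ p, H p ∈ Set.Icc (0:ℝ) 1 := fun p => by
        have h1 := hprod_mem p.1
        have h2 := hG01 (p.1 (Fin.last N), p.2)
        have h3 := h01 p.2
        constructor
        · exact mul_nonneg h1.1 (mul_nonneg h2.1 h3.1)
        · simp only [hHdef]
          have hbc0 : (0:ℝ) ≤ G (p.1 (Fin.last N), p.2) * g p.2 := mul_nonneg h2.1 h3.1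
          have hbc1 : G (p.1 (Fin.last N), p.2) * g p.2 ≤ 1 := by nlinarith [h2.1, h2.2, h3.1, h3.2]
          nlinarith [h1.1, h1.2]
      have hHb : ∀ p, |H p| ≤ 1 := fun p => by
        rw [abs_le]; exact ⟨by linarith [(hH01 p).1], (hH01 p).2⟩
      have hHm : Measurable H := by
        refine Measurable.mul ?_ (Measurable.mul ?_ (hg.comp measurable_snd))
        · refine Finset.measurable_prod _ fun i _ => ?_
          exact hGm.comp (((measurable_pi_apply _).comp measurable_fst).prodMk
            ((measurable_pi_apply _).comp measurable_fst))
        · exact hGm.comp (((measurable_pi_apply _).comp measurable_fst).prodMk measurable_snd)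
      have hprod_eval : ∀ (ω : ℕ → S),
          (∏ i ∈ Finset.range n,
            G ((fun j : Fin (N+1) => ω (j : ℕ)) ⟨min (k + i) N, by omega⟩,
               (fun j : Fin (N+1) => ω (j : ℕ)) ⟨min (k + i + 1) N, by omega⟩)) =
          ∏ i ∈ Finset.range n, G (ω (k + i), ω (k + i + 1)) := fun ω => by
        refine Finset.prod_congr rfl fun i hi => ?_
        have hi' : i < n := Finset.mem_range.mp hi
        have e1 : min (k + i) N = k + i := by omega
        have e2 : min (k + i + 1) N = k + i + 1 := by omega
        simp only [e1, e2]
      have hstep := traj_step P ξ hξ x N H hHm hHb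
      have lhs_eq : ∫ ω, (∏ i ∈ Finset.range (n+1), G (ω (k + i), ω (k + i + 1))) *
          g (ω (k + (n+1))) ∂(ξ x) =
          ∫ ω, H ((fun j : Fin (N+1) => ω (j : ℕ)), ω (N + 1)) ∂(ξ x) := by
        refine integral_congr_ae (ae_of_all _ fun ω => ?_)
        simp only [hHdef, hprod_eval ω, Finset.prod_range_succ, Fin.val_last]
        have : k + (n + 1) = N + 1 := by omega
        rw [this, mul_assoc]
      have rhs_eq : ∫ ω, ∫ s, H ((fun j : Fin (N+1) => ω (j : ℕ)), s) ∂(P (ω N)) ∂(ξ x) =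
          ∫ ω, (∏ i ∈ Finset.range n, G (ω (k + i), ω (k + i + 1))) *
            (PhiOp P G g) (ω (k + n)) ∂(ξ x) := by
        refine integral_congr_ae (ae_of_all _ fun ω => ?_)
        simp only [hHdef, hprod_eval ω, Fin.val_last]
        rw [integral_const_mul]
        rfl
      calc ∫ ω, (∏ i ∈ Finset.range (n+1), G (ω (k + i), ω (k + i + 1))) *
            g (ω (k + (n+1))) ∂(ξ x)
          = ∫ ω, H ((fun j : Fin (N+1) => ω (j : ℕ)), ω (N + 1)) ∂(ξ x) := lhs_eq
        _ = ∫ ω, ∫ s, H ((fun j : Fin (N+1) => ω (j : ℕ)), s) ∂(P (ω N)) ∂(ξ x) := hstep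
        _ = ∫ ω, (∏ i ∈ Finset.range n, G (ω (k + i), ω (k + i + 1))) *
              (PhiOp P G g) (ω (k + n)) ∂(ξ x) := rhs_eq
        _ = ∫ z, (PhiOp P G)^[n] (PhiOp P G g) z ∂(kpow P k x) := ih (PhiOp P G g) hPm hP01 k x
        _ = ∫ z, (PhiOp P G)^[n+1] g z ∂(kpow P k x) := by
              rw [Function.iterate_succ_apply]



end AuxProofs
/-- Comparison of the product functional `S_ν(n) = E_ν[∏ G(X_i,X_{i+1})]`
started at a point with the one started from `μ`, up to a TV error. -/
theorem product_functional_tv_comparison {S : Type*} [MeasurableSpace S]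
    (P : ProbabilityTheory.Kernel S S) [IsMarkovKernel P]
    (ξ : ProbabilityTheory.Kernel S (ℕ → S))
    (hξ : ∀ x : S, IsTrajMeasure P (MeasureTheory.Measure.dirac x) (ξ x))
    (G : S × S → ℝ) (hGmeas : Measurable G) (hG01 : ∀ q, G q ∈ Set.Icc (0 : ℝ) 1)
    (μ : MeasureTheory.Measure S) [IsProbabilityMeasure μ]
    (x : S) (m k : ℕ) (hk : k ≤ m) :
    ∫ ω, ∏ i ∈ Finset.range m, G (ω i, ω (i + 1)) ∂(ξ x) ≤
      (∫ ω, ∏ i ∈ Finset.range (m - k), G (ω i, ω (i + 1)) ∂(μ.bind fun z => ξ z)) +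
        2 * tvDist ((kpow P k) x) μ := by
  haveI : IsProbabilityMeasure (ξ x) := (hξ x).1
  haveI : IsMarkovKernel ξ := ⟨fun z => (hξ z).1⟩
  haveI := isMarkovKernel_kpow' P k
  set f : S → ℝ := (PhiOp P G)^[m - k] (fun _ => (1:ℝ)) with hf
  obtain ⟨hfm, hf01⟩ := PhiOp_iter_meas P G hGmeas hG01 (m - k)
  have hprodmeas : ∀ (a b : ℕ), Measurable fun ω : ℕ → S =>
      ∏ i ∈ Finset.range a, G (ω (b + i), ω (b + i + 1)) := fun a b =>
    Finset.measurable_prod _ fun i _ =>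
      hGmeas.comp ((measurable_pi_apply _).prodMk (measurable_pi_apply _))
  have hprod01 : ∀ (a b : ℕ) (ω : ℕ → S),
      (∏ i ∈ Finset.range a, G (ω (b + i), ω (b + i + 1))) ∈ Set.Icc (0:ℝ) 1 := fun a b ω =>
    ⟨Finset.prod_nonneg fun i _ => (hG01 _).1,
     Finset.prod_le_one (fun i _ => (hG01 _).1) (fun i _ => (hG01 _).2)⟩
  -- the Vrec identity at (k, x)
  have hVx := traj_Vrec P ξ hξ G hGmeas hG01 (m - k) (fun _ => (1:ℝ)) measurable_const
    (fun z => by simp) k x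
  simp only [mul_one] at hVx
  -- the Vrec identity at (0, z)
  have hVz : ∀ z : S, ∫ ω, ∏ i ∈ Finset.range (m - k), G (ω i, ω (i + 1)) ∂(ξ z) = f z := by
    intro z
    have h := traj_Vrec P ξ hξ G hGmeas hG01 (m - k) (fun _ => (1:ℝ)) measurable_const
      (fun z => by simp) 0 z
    simp only [Nat.zero_add, mul_one] at h
    rw [h]
    simp only [kpow, Kernel.id_apply]
    exact integral_dirac' _ _ hfm.stronglyMeasurable
  -- monotonicity step
  have hmono : ∫ ω, ∏ i ∈ Finset.range m, G (ω i, ω (i + 1)) ∂(ξ x) ≤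
      ∫ ω, ∏ i ∈ Finset.range (m - k), G (ω (k + i), ω (k + i + 1)) ∂(ξ x) := by
    refine integral_mono
      (integrable_of_bound' _ (by simpa using hprodmeas m 0) ?_)
      (integrable_of_bound' _ (hprodmeas (m - k) k) ?_) ?_
    · intro ω
      have := hprod01 m 0 ω
      simp only [Nat.zero_add] at this
      rw [abs_le]; exact ⟨by linarith [this.1], this.2⟩
    · intro ω
      have := hprod01 (m - k) k ω
      rw [abs_le]; exact ⟨by linarith [this.1], this.2⟩
    · intro ω
      have hsplit : ∏ i ∈ Finset.range m, G (ω i, ω (i + 1)) =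
          (∏ i ∈ Finset.range k, G (ω i, ω (i + 1))) *
            ∏ i ∈ Finset.Ico k m, G (ω i, ω (i + 1)) :=
        (Finset.prod_range_mul_prod_Ico _ hk).symm
      have hIco : ∏ i ∈ Finset.Ico k m, G (ω i, ω (i + 1)) =
          ∏ i ∈ Finset.range (m - k), G (ω (k + i), ω (k + i + 1)) :=
        Finset.prod_Ico_eq_prod_range _ k m
      have h1 := hprod01 k 0 ω
      simp only [Nat.zero_add] at h1
      have h2 : (0:ℝ) ≤ ∏ i ∈ Finset.Ico k m, G (ω i, ω (i + 1)) :=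
        Finset.prod_nonneg fun i _ => (hG01 _).1
      calc ∏ i ∈ Finset.range m, G (ω i, ω (i + 1))
          = (∏ i ∈ Finset.range k, G (ω i, ω (i + 1))) *
              ∏ i ∈ Finset.Ico k m, G (ω i, ω (i + 1)) := hsplit
        _ ≤ ∏ i ∈ Finset.Ico k m, G (ω i, ω (i + 1)) := mul_le_of_le_one_left h2 h1.2
        _ = ∏ i ∈ Finset.range (m - k), G (ω (k + i), ω (k + i + 1)) := hIco
  -- TV step
  have hTV := integral_le_add_tv ((kpow P k) x) μ hfm hf01
  -- bind step
  have hbind : ∫ ω, ∏ i ∈ Finset.range (m - k), G (ω i, ω (i + 1)) ∂(μ.bind fun z => ξ z) =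
      ∫ z, f z ∂μ := by
    have hpm : Measurable fun ω : ℕ → S => ∏ i ∈ Finset.range (m - k), G (ω i, ω (i + 1)) := by
      simpa using hprodmeas (m - k) 0
    have hp01 : ∀ ω : ℕ → S,
        (∏ i ∈ Finset.range (m - k), G (ω i, ω (i + 1))) ∈ Set.Icc (0:ℝ) 1 := fun ω => by
      simpa using hprod01 (m - k) 0 ω
    rw [integral_bind01 μ ξ hpm hp01]
    exact integral_congr_ae (ae_of_all _ fun z => hVz z)
  calc ∫ ω, ∏ i ∈ Finset.range m, G (ω i, ω (i + 1)) ∂(ξ x)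
      ≤ ∫ ω, ∏ i ∈ Finset.range (m - k), G (ω (k + i), ω (k + i + 1)) ∂(ξ x) := hmono
    _ = ∫ z, f z ∂((kpow P k) x) := hVx
    _ ≤ ∫ z, f z ∂μ + 2 * tvDist ((kpow P k) x) μ := hTV
    _ = (∫ ω, ∏ i ∈ Finset.range (m - k), G (ω i, ω (i + 1)) ∂(μ.bind fun z => ξ z)) +
        2 * tvDist ((kpow P k) x) μ := by rw [hbind]
end

section
/- Let φ ∈ (0,1) and let P be the AR(1) Markov kernel on ℝ given by P(x,·) = N(φx, 1) (the Gaussian measure with mean φx and variance 1). Set V(x) = 1 + (1−φ²)x², β = (1+φ²)/2, C = {x ∈ ℝ : x² ≤ 3/(1−φ²)}, b = 2−φ², G(x,x') = max(0, 1 − exp(−2φ x x')), and h = 1 − (1/√2) exp(−3φ²/(1−φ²)). Then: (i) ∫ V(x') P(x,dx') ≤ β V(x) for all x ∉ C and ≤ b V(x) for all x ∈ C; (ii) sup_{x∈C} ∫ G(x,x') P(x,dx') ≤ h; (iii) for every x ∈ ℝ and n ∈ ℕ, E_x[∏_{i=0}^{n−1} G(X_i, X_{i+1})] ≤ V(x)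 β̃^n, where δ = log(h)/(log(h)+log(β)−log(b)) ∈ (0,1) and β̃ = β^δ. -/
open MeasureTheory ProbabilityTheory ENNReal Filter Topology

section Setup

variable {S : Type*} [MeasurableSpace S]

section AuxAR1

open Real

lemma gauss_repr (m : ℝ) (f : ℝ → ℝ) :
    ∫ z, f z ∂(gaussianReal m 1) = ∫ x, gaussianPDFReal m 1 x * f x := by
  rw [gaussianReal_of_var_ne_zero m one_ne_zero]
  have h1 : (gaussianPDF m 1) = fun x => ((Real.toNNReal (gaussianPDFReal m 1 x)) : ℝ≥0∞) := rfl
  rw [h1, integral_withDensity_eq_integral_smul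
    ((measurable_gaussianPDFReal m 1).real_toNNReal)]
  congr 1; ext x
  simp [NNReal.smul_def, Real.coe_toNNReal _ (gaussianPDFReal_nonneg m 1 x)]

lemma gauss_integrable_iff (m : ℝ) (f : ℝ → ℝ) :
    Integrable f (gaussianReal m 1) ↔
      Integrable (fun x => gaussianPDFReal m 1 x * f x) volume := by
  rw [gaussianReal_of_var_ne_zero m one_ne_zero]
  have h1 : (gaussianPDF m 1) = fun x => ((Real.toNNReal (gaussianPDFReal m 1 x)) : ℝ≥0∞) := rfl
  rw [h1, integrable_withDensity_iff_integrable_smul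
    ((measurable_gaussianPDFReal m 1).real_toNNReal)]
  constructor <;> intro hI <;> refine hI.congr (Filter.Eventually.of_forall fun x => ?_) <;>
    simp [NNReal.smul_def, Real.coe_toNNReal _ (gaussianPDFReal_nonneg m 1 x)]

lemma integrable_sq_exp : Integrable (fun x : ℝ => x^2 * rexp (-(1/2) * x^2)) := by
  have := integrable_rpow_mul_exp_neg_mul_sq (b := 1/2) (by norm_num) (s := 2) (by norm_num)
  refine this.congr (Filter.Eventually.of_forall fun x => ?_)
  show x ^ (2:ℝ) * rexp (-(1/2) * x^2) = x ^ 2 * rexp (-(1/2) * x^2)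
  rw [show ((2:ℝ)) = ((2:ℕ):ℝ) by norm_num, Real.rpow_natCast]

lemma int_sq_exp : ∫ x : ℝ, x^2 * rexp (-(1/2) * x^2) = Real.sqrt (2*π) := by
  have hd : ∀ x : ℝ, HasDerivAt (fun x : ℝ => x * rexp (-(1/2) * x^2))
      (rexp (-(1/2) * x^2) - x^2 * rexp (-(1/2) * x^2)) x := by
    intro x
    have h1 : HasDerivAt (fun x : ℝ => -(1/2) * x^2) (-x) x := by
      simpa using ((hasDerivAt_pow 2 x).const_mul (-(1/2) : ℝ))
    have h2 := (h1.exp)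
    have : HasDerivAt (fun y : ℝ => y * rexp (-(1/2) * y^2))
        (1 * rexp (-(1/2) * x^2) + x * (rexp (-(1/2) * x^2) * -x)) x := (hasDerivAt_id x).mul h2
    convert this using 1
    ring
  have hint : Integrable (fun x : ℝ =>
      rexp (-(1/2) * x^2) - x^2 * rexp (-(1/2) * x^2)) :=
    (integrable_exp_neg_mul_sq (by norm_num : (0:ℝ) < 1/2)).sub integrable_sq_exp
  have h0 := integral_eq_zero_of_hasDerivAt_of_integrable hd hint
    (by simpa using integrable_mul_exp_neg_mul_sq (by norm_num : (0:ℝ) < 1/2))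
  rw [integral_sub (integrable_exp_neg_mul_sq (by norm_num)) integrable_sq_exp,
    sub_eq_zero] at h0
  rw [← h0, integral_gaussian]
  rw [show π / (1/2) = 2 * π by ring]

lemma pdf0_eq (x : ℝ) :
    gaussianPDFReal 0 1 x = (Real.sqrt (2*π))⁻¹ * rexp (-(1/2) * x^2) := by
  simp only [gaussianPDFReal, NNReal.coe_one, mul_one, sub_zero]
  congr 1
  ring

lemma pdf0_even (x : ℝ) : gaussianPDFReal 0 1 (-x) = gaussianPDFReal 0 1 x := by
  simp [pdf0_eq]

lemma integrable_pdf0_sq : Integrable (fun x : ℝ => gaussianPDFReal 0 1 x * x^2) := by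
  refine (integrable_sq_exp.const_mul ((Real.sqrt (2*π))⁻¹)).congr
    (Filter.Eventually.of_forall fun x => ?_)
  show (Real.sqrt (2*π))⁻¹ * (x^2 * rexp (-(1/2) * x^2)) = gaussianPDFReal 0 1 x * x^2
  rw [pdf0_eq]; ring

lemma integrable_pdf0_id : Integrable (fun x : ℝ => gaussianPDFReal 0 1 x * x) := by
  refine ((integrable_mul_exp_neg_mul_sq (by norm_num : (0:ℝ) < 1/2)).const_mul
    ((Real.sqrt (2*π))⁻¹)).congr (Filter.Eventually.of_forall fun x => ?_)
  show (Real.sqrt (2*π))⁻¹ * (x * rexp (-(1/2) * x^2)) = gaussianPDFReal 0 1 x * x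
  rw [pdf0_eq]; ring

lemma int_pdf0_sq : ∫ x : ℝ, gaussianPDFReal 0 1 x * x^2 = 1 := by
  have : (fun x : ℝ => gaussianPDFReal 0 1 x * x^2)
      = fun x : ℝ => (Real.sqrt (2*π))⁻¹ * (x^2 * rexp (-(1/2) * x^2)) := by
    ext x; rw [pdf0_eq]; ring
  rw [this, integral_const_mul, int_sq_exp, inv_mul_cancel₀]
  positivity

lemma int_pdf0_id : ∫ x : ℝ, gaussianPDFReal 0 1 x * x = 0 := by
  have h := integral_neg_eq_self (fun x : ℝ => gaussianPDFReal 0 1 x * x) volume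
  have h2 : ∫ x : ℝ, gaussianPDFReal 0 1 (-x) * (-x)
      = - ∫ x : ℝ, gaussianPDFReal 0 1 x * x := by
    rw [← integral_neg]
    congr 1; ext x; rw [pdf0_even]; ring
  rw [h2] at h
  linarith

lemma pdf_shift (m x : ℝ) : gaussianPDFReal m 1 x = gaussianPDFReal 0 1 (x - m) := by
  rw [gaussianPDFReal_sub, zero_add]

lemma g_expand (m : ℝ) : (fun x : ℝ => gaussianPDFReal 0 1 x * (x + m)^2)
    = fun x : ℝ => gaussianPDFReal 0 1 x * x^2 + (2*m) * (gaussianPDFReal 0 1 x * x)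
      + m^2 * gaussianPDFReal 0 1 x := by
  ext x; ring

lemma integrable_g (m : ℝ) : Integrable (fun x : ℝ => gaussianPDFReal 0 1 x * (x + m)^2) := by
  rw [g_expand]
  exact (integrable_pdf0_sq.add (integrable_pdf0_id.const_mul (2*m))).add
    ((integrable_gaussianPDFReal 0 1).const_mul (m^2))

lemma int_g (m : ℝ) : ∫ x : ℝ, gaussianPDFReal 0 1 x * (x + m)^2 = 1 + m^2 := by
  rw [g_expand]
  have h1 : Integrable (fun x : ℝ => gaussianPDFReal 0 1 x * x^2 +
      2 * m * (gaussianPDFReal 0 1 x * x)) :=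
    integrable_pdf0_sq.add (integrable_pdf0_id.const_mul (2*m))
  have h2 : Integrable (fun x : ℝ => m^2 * gaussianPDFReal 0 1 x) :=
    (integrable_gaussianPDFReal 0 1).const_mul (m^2)
  rw [integral_add h1 h2, integral_add integrable_pdf0_sq (integrable_pdf0_id.const_mul (2*m)),
    integral_const_mul, integral_const_mul, int_pdf0_sq, int_pdf0_id,
    integral_gaussianPDFReal_eq_one 0 one_ne_zero]
  ring

lemma pdfm_sq_eq (m : ℝ) : (fun x : ℝ => gaussianPDFReal m 1 x * x^2)
    = fun x : ℝ => gaussianPDFReal 0 1 (x - m) * ((x - m) + m)^2 := by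
  ext x; rw [pdf_shift]; ring_nf

lemma integrable_pdfm_sq (m : ℝ) : Integrable (fun x : ℝ => gaussianPDFReal m 1 x * x^2) := by
  rw [pdfm_sq_eq]
  exact (integrable_g m).comp_sub_right m

lemma int_pdfm_sq (m : ℝ) : ∫ x : ℝ, gaussianPDFReal m 1 x * x^2 = 1 + m^2 := by
  rw [pdfm_sq_eq]
  rw [integral_sub_right_eq_self (fun x : ℝ => gaussianPDFReal 0 1 x * (x + m)^2) m]
  exact int_g m

lemma moment2 (m : ℝ) : ∫ z, z^2 ∂(gaussianReal m 1) = 1 + m^2 := by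
  rw [gauss_repr]; exact int_pdfm_sq m

lemma integrable_sq_gauss (m : ℝ) : Integrable (fun z : ℝ => z^2) (gaussianReal m 1) := by
  rw [gauss_integrable_iff]; exact integrable_pdfm_sq m

lemma pdfm_eq (m x : ℝ) :
    gaussianPDFReal m 1 x = (Real.sqrt (2*π))⁻¹ * rexp (-(x - m)^2 / 2) := by
  simp [gaussianPDFReal]

lemma min_one_exp_meas (m : ℝ) : Measurable (fun z : ℝ => min 1 (rexp (-(2 * m * z)))) :=
  measurable_const.min ((measurable_id.const_mul (2*m)).neg.exp)

lemma integrable_min_gauss (m : ℝ) :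
    Integrable (fun z : ℝ => min 1 (rexp (-(2 * m * z)))) (gaussianReal m 1) := by
  refine Integrable.mono' (integrable_const 1) ((min_one_exp_meas m).aestronglyMeasurable)
    (Filter.Eventually.of_forall fun z => ?_)
  rw [Real.norm_eq_abs, abs_of_nonneg (le_min zero_le_one (Real.exp_pos _).le)]
  exact min_le_left _ _

lemma gauss_min_lower (m : ℝ) :
    (Real.sqrt 2)⁻¹ * rexp (-(m^2)) ≤ ∫ z, min 1 (rexp (-(2 * m * z))) ∂(gaussianReal m 1) := by
  rw [gauss_repr]
  have hlow : Integrable (fun x : ℝ =>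
      (Real.sqrt (2*π))⁻¹ * rexp (-(m^2)) * rexp (-(1:ℝ) * x^2)) :=
    (integrable_exp_neg_mul_sq one_pos).const_mul _
  have hup : Integrable (fun x : ℝ => gaussianPDFReal m 1 x * min 1 (rexp (-(2 * m * x)))) := by
    refine Integrable.mono' (integrable_gaussianPDFReal m 1)
      (((measurable_gaussianPDFReal m 1).mul (min_one_exp_meas m)).aestronglyMeasurable)
      (Filter.Eventually.of_forall fun x => ?_)
    rw [Real.norm_eq_abs, abs_of_nonneg (mul_nonneg (gaussianPDFReal_nonneg _ _ _)
      (le_min zero_le_one (Real.exp_pos _).le))]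
    calc gaussianPDFReal m 1 x * min 1 (rexp (-(2 * m * x)))
        ≤ gaussianPDFReal m 1 x * 1 := by
          exact mul_le_mul_of_nonneg_left (min_le_left _ _) (gaussianPDFReal_nonneg _ _ _)
      _ = gaussianPDFReal m 1 x := mul_one _
  have hptw : ∀ x : ℝ, (Real.sqrt (2*π))⁻¹ * rexp (-(m^2)) * rexp (-(1:ℝ) * x^2)
      ≤ gaussianPDFReal m 1 x * min 1 (rexp (-(2 * m * x))) := by
    intro x
    rw [pdfm_eq, mul_assoc, mul_assoc]
    refine mul_le_mul_of_nonneg_left ?_ (by positivity)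
    rw [← Real.exp_add, mul_comm (rexp (-(x - m)^2 / 2)), min_mul_of_nonneg _ _ (Real.exp_pos _).le,
      one_mul, ← Real.exp_add]
    refine le_min (Real.exp_le_exp.2 (by nlinarith [sq_nonneg (x+m)]))
      (Real.exp_le_exp.2 (by nlinarith [sq_nonneg (x+m)]))
  calc (Real.sqrt 2)⁻¹ * rexp (-(m^2))
      = (Real.sqrt (2*π))⁻¹ * rexp (-(m^2)) * Real.sqrt (π / 1) := by
        rw [Real.sqrt_mul (by norm_num : (0:ℝ) ≤ 2)]
        rw [div_one]
        have hπ : Real.sqrt π ≠ 0 := by positivity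
        field_simp
    _ = ∫ x : ℝ, (Real.sqrt (2*π))⁻¹ * rexp (-(m^2)) * rexp (-(1:ℝ) * x^2) := by
        rw [integral_const_mul, integral_gaussian]
    _ ≤ _ := integral_mono hlow hup hptw

lemma gauss_G_bound (m : ℝ) :
    ∫ z, max 0 (1 - rexp (-(2 * m * z))) ∂(gaussianReal m 1)
      ≤ 1 - (Real.sqrt 2)⁻¹ * rexp (-(m^2)) := by
  have hmax : (fun z : ℝ => max 0 (1 - rexp (-(2 * m * z))))
      = fun z : ℝ => 1 - min 1 (rexp (-(2 * m * z))) := by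
    ext z
    rcases le_total (rexp (-(2 * m * z))) 1 with hc | hc
    · rw [min_eq_right hc, max_eq_right (by linarith)]
    · rw [min_eq_left hc, max_eq_left (by linarith)]; norm_num
  rw [hmax, integral_sub (integrable_const 1) (integrable_min_gauss m)]
  have h1 : ∫ (_ : ℝ), (1:ℝ) ∂(gaussianReal m 1) = 1 := by simp
  rw [h1]
  linarith [gauss_min_lower m]

lemma intV_gauss (c m : ℝ) :
    ∫ z, (1 + c * z^2) ∂(gaussianReal m 1) = 1 + c * (1 + m^2) := by
  rw [integral_add (integrable_const 1) ((integrable_sq_gauss m).const_mul c),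
    integral_const_mul, moment2]
  simp

lemma integrable_V_gauss (c m : ℝ) :
    Integrable (fun z : ℝ => 1 + c * z^2) (gaussianReal m 1) :=
  (integrable_const 1).add ((integrable_sq_gauss m).const_mul c)

lemma traj_prod_bound {P : Kernel ℝ ℝ} [IsMarkovKernel P]
    {μ : Measure (ℕ → ℝ)} [IsProbabilityMeasure μ] {x : ℝ}
    (h2 : μ.map (fun ω => ω 0) = MeasureTheory.Measure.dirac x)
    (h3 : ∀ n : ℕ,
      μ.map (fun ω => ((fun i : Fin (n + 1) => ω (i : ℕ)), ω (n + 1))) =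
        (μ.map (fun ω => fun i : Fin (n + 1) => ω (i : ℕ))).compProd
          (P.comap (fun v : Fin (n + 1) → ℝ => v (Fin.last n)) (measurable_pi_apply _)))
    {Gnn : ℝ × ℝ → ℝ≥0∞} (hGnn : Measurable Gnn)
    {W : ℝ → ℝ≥0∞} (hW : Measurable W) {r : ℝ≥0∞}
    (hstep : ∀ y : ℝ, ∫⁻ z, Gnn (y, z) * W z ∂(P y) ≤ r * W y) :
    ∀ n : ℕ, ∫⁻ ω, (∏ i ∈ Finset.range n, Gnn (ω i, ω (i + 1))) * W (ω n) ∂μ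
      ≤ r ^ n * W x := by
  intro n
  induction n with
  | zero =>
    simp only [Finset.range_zero, Finset.prod_empty, one_mul, pow_zero]
    rw [← lintegral_map hW (measurable_pi_apply 0), h2, lintegral_dirac' _ hW]
  | succ n ih =>
    set pf : (ℕ → ℝ) → (Fin (n + 1) → ℝ) := fun ω => fun i : Fin (n + 1) => ω (i : ℕ) with hpf
    have hpfm : Measurable pf := measurable_pi_lambda _ (fun i => measurable_pi_apply _)
    set κ := P.comap (fun v : Fin (n + 1) → ℝ => v (Fin.last n)) (measurable_pi_apply _) with hκ
    haveI : IsMarkovKernel κ := by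
      constructor
      intro v
      rw [hκ, Kernel.comap_apply]
      infer_instance
    haveI : IsProbabilityMeasure (μ.map pf) := Measure.isProbabilityMeasure_map hpfm.aemeasurable
    set f : ((Fin (n + 1) → ℝ) × ℝ) → ℝ≥0∞ := fun p =>
      (∏ i : Fin n, Gnn (p.1 i.castSucc, p.1 i.succ)) *
        (Gnn (p.1 (Fin.last n), p.2) * W p.2) with hf
    have hfm : Measurable f := by
      refine Measurable.mul ?_ (Measurable.mul ?_ (hW.comp measurable_snd))
      · refine Finset.measurable_prod _ (fun i _ => ?_)
        exact hGnn.comp (((measurable_pi_apply _).comp measurable_fst).prodMk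
          ((measurable_pi_apply _).comp measurable_fst))
      · exact hGnn.comp (((measurable_pi_apply _).comp measurable_fst).prodMk measurable_snd)
    have key1 : ∀ ω : ℕ → ℝ,
        (∏ i ∈ Finset.range (n + 1), Gnn (ω i, ω (i + 1))) * W (ω (n + 1))
          = f (pf ω, ω (n + 1)) := by
      intro ω
      rw [Finset.prod_range_succ, hf]
      simp only [hpf, Fin.coe_castSucc, Fin.val_succ, Fin.val_last]
      rw [Fin.prod_univ_eq_prod_range (fun i => Gnn (ω i, ω (i + 1))) n]
      ring
    have hpairm : Measurable (fun ω : ℕ → ℝ => (pf ω, ω (n + 1))) :=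
      hpfm.prodMk (measurable_pi_apply _)
    calc ∫⁻ ω, (∏ i ∈ Finset.range (n + 1), Gnn (ω i, ω (i + 1))) * W (ω (n + 1)) ∂μ
        = ∫⁻ ω, f (pf ω, ω (n + 1)) ∂μ := by
          congr 1; ext ω; exact key1 ω
      _ = ∫⁻ p, f p ∂(μ.map (fun ω => (pf ω, ω (n + 1)))) :=
          (lintegral_map hfm hpairm).symm
      _ = ∫⁻ p, f p ∂((μ.map pf).compProd κ) := by rw [hpf, hκ, h3 n]
      _ = ∫⁻ v, ∫⁻ y, f (v, y) ∂(κ v) ∂(μ.map pf) := Measure.lintegral_compProd hfm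
      _ ≤ ∫⁻ v, r * ((∏ i : Fin n, Gnn (v i.castSucc, v i.succ)) * W (v (Fin.last n)))
            ∂(μ.map pf) := by
          refine lintegral_mono (fun v => ?_)
          rw [hf]
          simp only
          have hm : Measurable (fun y : ℝ => Gnn (v (Fin.last n), y) * W y) :=
            (hGnn.comp measurable_prodMk_left).mul hW
          rw [lintegral_const_mul _ hm]
          rw [hκ, Kernel.comap_apply]
          calc (∏ i : Fin n, Gnn (v i.castSucc, v i.succ)) *
                ∫⁻ y, Gnn (v (Fin.last n), y) * W y ∂(P (v (Fin.last n)))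
              ≤ (∏ i : Fin n, Gnn (v i.castSucc, v i.succ)) * (r * W (v (Fin.last n))) :=
                mul_le_mul_right (hstep _) _
            _ = r * ((∏ i : Fin n, Gnn (v i.castSucc, v i.succ)) * W (v (Fin.last n))) := by
                ring
      _ = r * ∫⁻ v, (∏ i : Fin n, Gnn (v i.castSucc, v i.succ)) * W (v (Fin.last n))
            ∂(μ.map pf) := by
          rw [lintegral_const_mul]
          refine Measurable.mul ?_ (hW.comp (measurable_pi_apply _))
          exact Finset.measurable_prod _ (fun i _ => hGnn.comp
            ((measurable_pi_apply _).prodMk (measurable_pi_apply _)))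
      _ = r * ∫⁻ ω, (∏ i ∈ Finset.range n, Gnn (ω i, ω (i + 1))) * W (ω n) ∂μ := by
          congr 1
          rw [lintegral_map _ hpfm]
          · congr 1; ext ω
            simp only [hpf, Fin.coe_castSucc, Fin.val_succ, Fin.val_last]
            rw [Fin.prod_univ_eq_prod_range (fun i => Gnn (ω i, ω (i + 1))) n]
          · refine Measurable.mul ?_ (hW.comp (measurable_pi_apply _))
            exact Finset.measurable_prod _ (fun i _ => hGnn.comp
              ((measurable_pi_apply _).prodMk (measurable_pi_apply _)))
      _ ≤ r * (r ^ n * W x) := mul_le_mul_right ih _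
      _ = r ^ (n + 1) * W x := by rw [pow_succ]; ring

lemma holder_step {μ : Measure ℝ} [IsProbabilityMeasure μ] {Gx V : ℝ → ℝ} {δ a B : ℝ}
    (hGm : Measurable Gx) (hG0 : ∀ z, 0 ≤ Gx z) (hG1 : ∀ z, Gx z ≤ 1)
    (hVm : Measurable V) (hV0 : ∀ z, 0 ≤ V z) (hVint : Integrable V μ)
    (hδ0 : 0 < δ) (hδ1 : δ < 1)
    (ha0 : 0 ≤ a) (hA : ∫ z, Gx z ∂μ ≤ a)
    (hB : ∫ z, V z ∂μ ≤ B) :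
    ∫⁻ z, ENNReal.ofReal (Gx z) * ENNReal.ofReal (V z ^ δ) ∂μ
      ≤ ENNReal.ofReal (a ^ (1 - δ) * B ^ δ) := by
  set g : ℝ → ℝ≥0∞ := fun z => ENNReal.ofReal (Gx z) with hg
  set w : ℝ → ℝ≥0∞ := fun z => ENNReal.ofReal (V z) with hw
  have hgm : Measurable g := hGm.ennreal_ofReal
  have hwm : Measurable w := hVm.ennreal_ofReal
  have h1δ : 0 ≤ 1 - δ := by linarith
  have hpq : Real.HolderConjugate (1 - δ)⁻¹ δ⁻¹ := by
    refine Real.holderConjugate_iff.2 ⟨?_, ?_⟩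
    · rw [lt_inv_comm₀] <;> linarith
    · rw [inv_inv, inv_inv]; ring
  have hptw : ∀ z, g z * w z ^ δ = (g z ^ (1 - δ)) * ((g z * w z) ^ δ) := by
    intro z
    rw [ENNReal.mul_rpow_of_nonneg _ _ hδ0.le, ← mul_assoc,
      ← ENNReal.rpow_add_of_nonneg _ _ h1δ hδ0.le]
    norm_num
  have hH := ENNReal.lintegral_mul_le_Lp_mul_Lq μ hpq
    ((hgm.pow_const _).aemeasurable) (((hgm.mul hwm).pow_const _).aemeasurable)
    (f := fun z => g z ^ (1 - δ)) (g := fun z => (g z * w z) ^ δ)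
  have e1 : ∀ z : ℝ, (g z ^ (1 - δ)) ^ (1 - δ)⁻¹ = g z := by
    intro z
    rw [← ENNReal.rpow_mul, mul_inv_cancel₀ (by linarith : (1:ℝ) - δ ≠ 0), ENNReal.rpow_one]
  have e2 : ∀ z : ℝ, ((g z * w z) ^ δ) ^ δ⁻¹ = g z * w z := by
    intro z
    rw [← ENNReal.rpow_mul, mul_inv_cancel₀ (ne_of_gt hδ0), ENNReal.rpow_one]
  have hX : ∫⁻ z, g z ∂μ ≤ ENNReal.ofReal a := by
    rw [hg]
    rw [← ofReal_integral_eq_lintegral_ofReal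
      (by refine Integrable.mono' (integrable_const 1) hGm.aestronglyMeasurable
            (Filter.Eventually.of_forall fun z => ?_)
          rw [Real.norm_eq_abs, abs_of_nonneg (hG0 z)]; exact hG1 z)
      (Filter.Eventually.of_forall hG0)]
    exact ENNReal.ofReal_le_ofReal hA
  have hY : ∫⁻ z, g z * w z ∂μ ≤ ENNReal.ofReal B := by
    calc ∫⁻ z, g z * w z ∂μ ≤ ∫⁻ z, w z ∂μ := by
          refine lintegral_mono (fun z => ?_)
          calc g z * w z ≤ 1 * w z :=
                mul_le_mul_left (ENNReal.ofReal_le_one.2 (hG1 z)) _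
            _ = w z := one_mul _
      _ ≤ ENNReal.ofReal B := by
          rw [hw, ← ofReal_integral_eq_lintegral_ofReal hVint
            (Filter.Eventually.of_forall hV0)]
          exact ENNReal.ofReal_le_ofReal hB
  calc ∫⁻ z, ENNReal.ofReal (Gx z) * ENNReal.ofReal (V z ^ δ) ∂μ
      = ∫⁻ z, g z * w z ^ δ ∂μ := by
        congr 1; ext z
        rw [← ENNReal.ofReal_rpow_of_nonneg (hV0 z) hδ0.le]
    _ = ∫⁻ z, (g z ^ (1 - δ)) * ((g z * w z) ^ δ) ∂μ := by
        congr 1; ext z; exact hptw z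
    _ ≤ (∫⁻ z, (g z ^ (1 - δ)) ^ (1 - δ)⁻¹ ∂μ) ^ (1 / (1 - δ)⁻¹)
        * (∫⁻ z, ((g z * w z) ^ δ) ^ δ⁻¹ ∂μ) ^ (1 / δ⁻¹) := hH
    _ = (∫⁻ z, g z ∂μ) ^ (1 - δ) * (∫⁻ z, g z * w z ∂μ) ^ δ := by
        rw [one_div, one_div, inv_inv, inv_inv]
        congr 2
        · exact lintegral_congr e1
        · exact lintegral_congr e2
    _ ≤ (ENNReal.ofReal a) ^ (1 - δ) * (ENNReal.ofReal B) ^ δ :=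
        mul_le_mul' (ENNReal.rpow_le_rpow hX h1δ) (ENNReal.rpow_le_rpow hY hδ0.le)
    _ = ENNReal.ofReal (a ^ (1 - δ) * B ^ δ) := by
        rw [ENNReal.ofReal_rpow_of_nonneg ha0 h1δ,
          ENNReal.ofReal_rpow_of_nonneg ?_ hδ0.le, ← ENNReal.ofReal_mul (by positivity)]
        exact le_trans (integral_nonneg hV0) hB

end AuxAR1

end Setup
/-- Drift and minorization-type estimates for the AR(1) chain
`P(x,·) = N(φx, 1)`, and the resulting geometric bound
`E_x[∏ G(X_i, X_{i+1})] ≤ V(x) β̃^n`. -/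
theorem ar1_drift_bound
    (φ : ℝ) (hφ : φ ∈ Set.Ioo (0 : ℝ) 1)
    (P : ProbabilityTheory.Kernel ℝ ℝ)
    (hP : ∀ x : ℝ, P x = ProbabilityTheory.gaussianReal (φ * x) 1)
    (ξ : ProbabilityTheory.Kernel ℝ (ℕ → ℝ))
    (hξ : ∀ x : ℝ, IsTrajMeasure P (MeasureTheory.Measure.dirac x) (ξ x))
    (V : ℝ → ℝ) (hV : ∀ x, V x = 1 + (1 - φ ^ 2) * x ^ 2)
    (β b h : ℝ) (hβ : β = (1 + φ ^ 2) / 2) (hb : b = 2 - φ ^ 2)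
    (hh : h = 1 - (1 / Real.sqrt 2) * Real.exp (-(3 * φ ^ 2 / (1 - φ ^ 2))))
    (C : Set ℝ) (hC : C = {x : ℝ | x ^ 2 ≤ 3 / (1 - φ ^ 2)})
    (G : ℝ × ℝ → ℝ) (hG : ∀ q : ℝ × ℝ, G q = max 0 (1 - Real.exp (-(2 * φ * q.1 * q.2))))
    (δ : ℝ) (hδdef : δ = Real.log h / (Real.log h + Real.log β - Real.log b)) :
    (∀ x ∉ C, ∫ z, V z ∂(P x) ≤ β * V x) ∧
      (∀ x ∈ C, ∫ z, V z ∂(P x) ≤ b * V x) ∧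
      (∀ x ∈ C, ∫ z, G (x, z) ∂(P x) ≤ h) ∧
      δ ∈ Set.Ioo (0 : ℝ) 1 ∧
      ∀ x : ℝ, ∀ n : ℕ,
        ∫ ω, ∏ i ∈ Finset.range n, G (ω i, ω (i + 1)) ∂(ξ x) ≤ V x * (β ^ δ) ^ n := by
  obtain ⟨hφ0, hφ1⟩ := hφ
  have hφ2 : 0 < 1 - φ^2 := by nlinarith
  have hVfun : V = fun x => 1 + (1 - φ^2) * x^2 := funext hV
  have hGfun : G = fun q : ℝ × ℝ => max 0 (1 - Real.exp (-(2 * φ * q.1 * q.2))) := funext hG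
  have hV1 : ∀ z, 1 ≤ V z := fun z => by rw [hV]; nlinarith [sq_nonneg z]
  have hV0 : ∀ z, 0 ≤ V z := fun z => le_trans zero_le_one (hV1 z)
  have hVm : Measurable V := by
    rw [hVfun]
    exact measurable_const.add ((measurable_id.pow_const 2).const_mul _)
  have hGm : Measurable G := by
    rw [hGfun]
    exact measurable_const.max (measurable_const.sub
      (((measurable_fst.const_mul (2*φ)).mul measurable_snd).neg.exp))
  have hG0 : ∀ q, 0 ≤ G q := fun q => by rw [hG]; exact le_max_left _ _
  have hG1 : ∀ q, G q ≤ 1 := fun q => by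
    rw [hG]
    exact max_le (by norm_num) (by linarith [Real.exp_pos (-(2 * φ * q.1 * q.2))])
  have hVval : ∀ x : ℝ, ∫ z, V z ∂(P x) = 2 - φ^2 + (1-φ^2) * φ^2 * x^2 := by
    intro x
    rw [hP x, hVfun, intV_gauss]
    ring
  have hVInt : ∀ x : ℝ, Integrable V (P x) := fun x => by
    rw [hP x, hVfun]; exact integrable_V_gauss _ _
  have hGInt : ∀ x y : ℝ, Integrable (fun z => G (y, z)) (P x) := by
    intro x y
    rw [hP x]
    refine Integrable.mono' (integrable_const 1)
      ((hGm.comp measurable_prodMk_left).aestronglyMeasurable)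
      (Filter.Eventually.of_forall fun z => ?_)
    rw [Real.norm_eq_abs, abs_of_nonneg (hG0 _)]
    exact hG1 _
  -- Part 1
  have p1 : ∀ x ∉ C, ∫ z, V z ∂(P x) ≤ β * V x := by
    intro x hx
    rw [hC] at hx
    simp only [Set.mem_setOf_eq, not_le] at hx
    have h3 : 3 < (1 - φ^2) * x^2 := by
      rw [div_lt_iff₀ hφ2] at hx
      linarith [hx]
    rw [hVval x, hβ, hV]
    nlinarith [mul_nonneg hφ2.le (by linarith : (0:ℝ) ≤ (1-φ^2) * x^2 - 3)]
  -- Part 2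
  have p2 : ∀ x ∈ C, ∫ z, V z ∂(P x) ≤ b * V x := by
    intro x _
    rw [hVval x, hb, hV]
    nlinarith [mul_nonneg (mul_nonneg hφ2.le hφ2.le) (sq_nonneg x)]
  -- Part 3
  have p3 : ∀ x ∈ C, ∫ z, G (x, z) ∂(P x) ≤ h := by
    intro x hx
    rw [hC] at hx
    simp only [Set.mem_setOf_eq] at hx
    rw [hP x]
    have heq : (fun z => G (x, z))
        = fun z => max 0 (1 - Real.exp (-(2 * (φ * x) * z))) := by
      ext z
      rw [hG]
      ring_nf
    rw [heq]
    refine le_trans (gauss_G_bound (φ * x)) ?_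
    rw [hh]
    have h5 : φ^2 * x^2 ≤ φ^2 * (3 / (1 - φ^2)) :=
      mul_le_mul_of_nonneg_left hx (sq_nonneg φ)
    have h6 : φ^2 * (3 / (1 - φ^2)) = 3 * φ^2 / (1 - φ^2) := by ring
    have h7 : -(3 * φ^2 / (1 - φ^2)) ≤ -((φ * x)^2) := by
      rw [mul_pow] at *
      nlinarith
    have h8 := Real.exp_le_exp.2 h7
    have h9 : (0:ℝ) < (Real.sqrt 2)⁻¹ := by positivity
    have h10 : (1 / Real.sqrt 2) * Real.exp (-(3 * φ^2 / (1 - φ^2)))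
        ≤ (Real.sqrt 2)⁻¹ * Real.exp (-((φ * x)^2)) := by
      rw [one_div]
      exact mul_le_mul_of_nonneg_left h8 h9.le
    linarith
  -- Part 4
  have hzs : (1:ℝ) < Real.sqrt 2 := by
    rw [show (1:ℝ) = Real.sqrt 1 by simp]
    exact Real.sqrt_lt_sqrt (by norm_num) (by norm_num)
  have hexp1 : Real.exp (-(3 * φ^2 / (1 - φ^2))) < 1 := by
    rw [Real.exp_lt_one_iff, neg_lt, neg_zero]
    positivity
  have hfrac : 0 < 1 / Real.sqrt 2 ∧ 1 / Real.sqrt 2 < 1 := by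
    constructor
    · positivity
    · rw [div_lt_one (by positivity)]; exact hzs
  have hh0 : 0 < h := by
    rw [hh]
    nlinarith [Real.exp_pos (-(3 * φ^2 / (1 - φ^2))), hfrac.1, hfrac.2, hexp1]
  have hh1 : h < 1 := by
    rw [hh]
    nlinarith [Real.exp_pos (-(3 * φ^2 / (1 - φ^2))), hfrac.1]
  have hβ0 : 0 < β := by rw [hβ]; nlinarith
  have hβ1 : β < 1 := by rw [hβ]; nlinarith
  have hbb1 : 1 < b := by rw [hb]; nlinarith
  have hb0 : 0 < b := by linarith
  have hlh : Real.log h < 0 := Real.log_neg hh0 hh1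
  have hlβ : Real.log β < 0 := Real.log_neg hβ0 hβ1
  have hlb : 0 < Real.log b := Real.log_pos hbb1
  have hD : Real.log h + Real.log β - Real.log b < 0 := by linarith
  have hδ0 : 0 < δ := by
    rw [hδdef]
    exact div_pos_of_neg_of_neg hlh hD
  have hδ1 : δ < 1 := by
    rw [hδdef, div_lt_one_of_neg hD]
    linarith
  have p4 : δ ∈ Set.Ioo (0:ℝ) 1 := ⟨hδ0, hδ1⟩
  refine ⟨p1, p2, p3, p4, ?_⟩
  -- Part 5
  have hδD : δ * (Real.log h + Real.log β - Real.log b) = Real.log h := by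
    rw [hδdef]
    field_simp
    rw [mul_div_assoc, div_self hD.ne, mul_one]
  have hkey : h ^ ((1:ℝ) - δ) * b ^ δ = β ^ δ := by
    rw [Real.rpow_def_of_pos hh0, Real.rpow_def_of_pos hb0, Real.rpow_def_of_pos hβ0,
      ← Real.exp_add, Real.exp_eq_exp]
    ring_nf
    ring_nf at hδD
    linarith
  haveI : IsMarkovKernel P := ⟨fun x => by rw [hP x]; infer_instance⟩
  intro x n
  obtain ⟨hprob, h2, h3⟩ := hξ x
  haveI := hprob
  have hWm : Measurable (fun z : ℝ => ENNReal.ofReal (V z ^ δ)) :=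
    ((Real.continuous_rpow_const hδ0.le).measurable.comp hVm).ennreal_ofReal
  have hstep : ∀ y : ℝ, ∫⁻ z, ENNReal.ofReal (G (y, z)) * ENNReal.ofReal (V z ^ δ) ∂(P y)
      ≤ ENNReal.ofReal (β ^ δ) * ENNReal.ofReal (V y ^ δ) := by
    intro y
    haveI : IsProbabilityMeasure (P y) := by rw [hP y]; infer_instance
    have hVy0 : 0 ≤ V y := hV0 y
    by_cases hyC : y ∈ C
    · have hHS := holder_step (μ := P y) (Gx := fun z => G (y, z)) (V := V) (δ := δ)
        (a := h) (B := b * V y) (hGm.comp measurable_prodMk_left) (fun z => hG0 _)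
        (fun z => hG1 _) hVm hV0 (hVInt y) hδ0 hδ1 hh0.le (p3 y hyC) (p2 y hyC)
      refine le_trans hHS ?_
      rw [Real.mul_rpow hb0.le hVy0, ← mul_assoc, hkey, ← ENNReal.ofReal_mul
        (Real.rpow_nonneg hβ0.le δ)]
    · have hA : ∫ z, G (y, z) ∂(P y) ≤ 1 := by
        calc ∫ z, G (y, z) ∂(P y) ≤ ∫ _, (1:ℝ) ∂(P y) :=
              integral_mono (hGInt y y) (integrable_const 1) (fun z => hG1 _)
          _ = 1 := by simp
      have hHS := holder_step (μ := P y) (Gx := fun z => G (y, z)) (V := V) (δ := δ)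
        (a := 1) (B := β * V y) (hGm.comp measurable_prodMk_left) (fun z => hG0 _)
        (fun z => hG1 _) hVm hV0 (hVInt y) hδ0 hδ1 zero_le_one hA (p1 y hyC)
      refine le_trans hHS ?_
      rw [Real.one_rpow, one_mul, Real.mul_rpow hβ0.le hVy0, ← ENNReal.ofReal_mul
        (Real.rpow_nonneg hβ0.le δ)]
  have main := traj_prod_bound (P := P) (μ := ξ x) (x := x) h2 h3
    (Gnn := fun q => ENNReal.ofReal (G q)) (hGm.ennreal_ofReal)
    (W := fun z => ENNReal.ofReal (V z ^ δ)) hWm (r := ENNReal.ofReal (β ^ δ)) hstep n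
  have hmf : Measurable (fun ω : ℕ → ℝ => ∏ i ∈ Finset.range n, G (ω i, ω (i+1))) :=
    Finset.measurable_prod _ (fun i _ => hGm.comp
      ((measurable_pi_apply i).prodMk (measurable_pi_apply (i+1))))
  have hnn : 0 ≤ V x * (β ^ δ) ^ n :=
    mul_nonneg (hV0 x) (pow_nonneg (Real.rpow_nonneg hβ0.le δ) n)
  rw [integral_eq_lintegral_of_nonneg_ae
    (Filter.Eventually.of_forall (fun ω => Finset.prod_nonneg fun i _ => hG0 _))
    hmf.aestronglyMeasurable]
  refine ENNReal.toReal_le_of_le_ofReal hnn ?_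
  calc ∫⁻ ω, ENNReal.ofReal (∏ i ∈ Finset.range n, G (ω i, ω (i+1))) ∂(ξ x)
      = ∫⁻ ω, ∏ i ∈ Finset.range n, ENNReal.ofReal (G (ω i, ω (i+1))) ∂(ξ x) := by
        congr 1; ext ω
        exact ENNReal.ofReal_prod_of_nonneg (fun i _ => hG0 _)
    _ ≤ ∫⁻ ω, (∏ i ∈ Finset.range n, ENNReal.ofReal (G (ω i, ω (i+1))))
          * ENNReal.ofReal (V (ω n) ^ δ) ∂(ξ x) := by
        refine lintegral_mono (fun ω => ?_)
        conv_lhs => rw [← mul_one (∏ i ∈ Finset.range n, ENNReal.ofReal (G (ω i, ω (i+1))))]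
        refine mul_le_mul_right ?_ _
        rw [ENNReal.one_le_ofReal]
        exact Real.one_le_rpow (hV1 _) hδ0.le
    _ ≤ ENNReal.ofReal (β ^ δ) ^ n * ENNReal.ofReal (V x ^ δ) := main
    _ = ENNReal.ofReal ((β ^ δ) ^ n * V x ^ δ) := by
        rw [← ENNReal.ofReal_pow (Real.rpow_nonneg hβ0.le δ), ← ENNReal.ofReal_mul
          (by positivity)]
    _ ≤ ENNReal.ofReal (V x * (β ^ δ) ^ n) := by
        refine ENNReal.ofReal_le_ofReal ?_
        have hVx : V x ^ δ ≤ V x := by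
          calc V x ^ δ ≤ V x ^ (1:ℝ) :=
                Real.rpow_le_rpow_of_exponent_le (hV1 x) hδ1.le
            _ = V x := Real.rpow_one _
        have hpw : (0:ℝ) ≤ (β ^ δ) ^ n :=
          pow_nonneg (Real.rpow_nonneg hβ0.le δ) n
        nlinarith [hpw, hVx]
end
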